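/- arXiv:1112.3307 — 8 statements merged into one kernel-verified Lean document; each statement's English description precedes it below -/
import Mathlib

section
/- Let X, Y, Z be real-valued random variables (with finite second moments) satisfying X + Y + Z = 0 almost surely. If random variables X', Y', Z' satisfy (X',Y') ~ (X,Y), (X',Z') ~ (X,Z), and (Y',Z') ~ (Y,Z), then (X',Y',Z') ~ (X,Y,Z), i.e., the triples are equal in joint distribution. -/
open MeasureTheory ProbabilityTheory

/-- If `X + Y + Z = 0` a.s. (with finite second moments) and `(X',Y') ~ (X,Y)`,
`(X',Z') ~ (X,Z)`, `(Y',Z') ~ (Y,Z)`, then `X' + Y' + Z' = 0` a.s. -/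
theorem stmt1 {Ω Ω' : Type*} [MeasurableSpace Ω] [MeasurableSpace Ω']
    (μ : Measure Ω) (ν : Measure Ω') [IsProbabilityMeasure μ] [IsProbabilityMeasure ν]
    (X Y Z : Ω → ℝ) (X' Y' Z' : Ω' → ℝ)
    (hX : MemLp X 2 μ) (hY : MemLp Y 2 μ) (hZ : MemLp Z 2 μ)
    (hsum : ∀ᵐ ω ∂μ, X ω + Y ω + Z ω = 0)
    (hXY : IdentDistrib (fun ω => (X' ω, Y' ω)) (fun ω => (X ω, Y ω)) ν μ)
    (hXZ : IdentDistrib (fun ω => (X' ω, Z' ω)) (fun ω => (X ω, Z ω)) ν μ)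
    (hYZ : IdentDistrib (fun ω => (Y' ω, Z' ω)) (fun ω => (Y ω, Z ω)) ν μ) :
    IdentDistrib (fun ω => (X' ω, Y' ω, Z' ω)) (fun ω => (X ω, Y ω, Z ω)) ν μ := by
  -- transport Memℒp
  have hX' : MemLp X' 2 ν := (hXY.comp measurable_fst).symm.memLp_snd hX
  have hY' : MemLp Y' 2 ν := (hXY.comp measurable_snd).symm.memLp_snd hY
  have hZ' : MemLp Z' 2 ν := (hXZ.comp measurable_snd).symm.memLp_snd hZ
  -- integrability of squares
  have iX : Integrable (fun ω => X ω ^ 2) μ := hX.integrable_sq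
  have iY : Integrable (fun ω => Y ω ^ 2) μ := hY.integrable_sq
  have iZ : Integrable (fun ω => Z ω ^ 2) μ := hZ.integrable_sq
  have iXY : Integrable (fun ω => (X ω + Y ω) ^ 2) μ := (hX.add hY).integrable_sq
  have iXZ : Integrable (fun ω => (X ω + Z ω) ^ 2) μ := (hX.add hZ).integrable_sq
  have iYZ : Integrable (fun ω => (Y ω + Z ω) ^ 2) μ := (hY.add hZ).integrable_sq
  have iX' : Integrable (fun ω => X' ω ^ 2) ν := hX'.integrable_sq
  have iY' : Integrable (fun ω => Y' ω ^ 2) ν := hY'.integrable_sq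
  have iZ' : Integrable (fun ω => Z' ω ^ 2) ν := hZ'.integrable_sq
  have iXY' : Integrable (fun ω => (X' ω + Y' ω) ^ 2) ν := (hX'.add hY').integrable_sq
  have iXZ' : Integrable (fun ω => (X' ω + Z' ω) ^ 2) ν := (hX'.add hZ').integrable_sq
  have iYZ' : Integrable (fun ω => (Y' ω + Z' ω) ^ 2) ν := (hY'.add hZ').integrable_sq
  -- equal integrals for pairwise functionals
  have mf1 : Measurable (fun p : ℝ × ℝ => p.1 ^ 2) := (measurable_fst.pow_const 2)
  have mf2 : Measurable (fun p : ℝ × ℝ => p.2 ^ 2) := (measurable_snd.pow_const 2)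
  have mfs : Measurable (fun p : ℝ × ℝ => (p.1 + p.2) ^ 2) :=
    ((measurable_fst.add measurable_snd).pow_const 2)
  have eX : ∫ ω, X' ω ^ 2 ∂ν = ∫ ω, X ω ^ 2 ∂μ := (hXY.comp mf1).integral_eq
  have eY : ∫ ω, Y' ω ^ 2 ∂ν = ∫ ω, Y ω ^ 2 ∂μ := (hXY.comp mf2).integral_eq
  have eZ : ∫ ω, Z' ω ^ 2 ∂ν = ∫ ω, Z ω ^ 2 ∂μ := (hXZ.comp mf2).integral_eq
  have eXY : ∫ ω, (X' ω + Y' ω) ^ 2 ∂ν = ∫ ω, (X ω + Y ω) ^ 2 ∂μ := (hXY.comp mfs).integral_eq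
  have eXZ : ∫ ω, (X' ω + Z' ω) ^ 2 ∂ν = ∫ ω, (X ω + Z ω) ^ 2 ∂μ := (hXZ.comp mfs).integral_eq
  have eYZ : ∫ ω, (Y' ω + Z' ω) ^ 2 ∂ν = ∫ ω, (Y ω + Z ω) ^ 2 ∂μ := (hYZ.comp mfs).integral_eq
  -- expand the square of the sum
  have expand : ∀ a b c : ℝ,
      (a + b + c) ^ 2 = (a + b) ^ 2 + (a + c) ^ 2 + (b + c) ^ 2 - a ^ 2 - b ^ 2 - c ^ 2 := by
    intros; ring
  have hintS : Integrable (fun ω => (X' ω + Y' ω + Z' ω) ^ 2) ν :=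
    ((hX'.add hY').add hZ').integrable_sq
  have keyν : ∫ ω, (X' ω + Y' ω + Z' ω) ^ 2 ∂ν
      = ∫ ω, (X' ω + Y' ω) ^ 2 ∂ν + ∫ ω, (X' ω + Z' ω) ^ 2 ∂ν + ∫ ω, (Y' ω + Z' ω) ^ 2 ∂ν
        - ∫ ω, X' ω ^ 2 ∂ν - ∫ ω, Y' ω ^ 2 ∂ν - ∫ ω, Z' ω ^ 2 ∂ν := by
    rw [show (fun ω => (X' ω + Y' ω + Z' ω) ^ 2) = fun ω =>
        (X' ω + Y' ω) ^ 2 + (X' ω + Z' ω) ^ 2 + (Y' ω + Z' ω) ^ 2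
          - X' ω ^ 2 - Y' ω ^ 2 - Z' ω ^ 2 from funext fun ω => expand _ _ _,
      integral_sub (show Integrable (fun ω => (X' ω + Y' ω) ^ 2 + (X' ω + Z' ω) ^ 2
          + (Y' ω + Z' ω) ^ 2 - X' ω ^ 2 - Y' ω ^ 2) ν from
        (((iXY'.add iXZ').add iYZ').sub iX').sub iY') iZ',
      integral_sub (show Integrable (fun ω => (X' ω + Y' ω) ^ 2 + (X' ω + Z' ω) ^ 2
          + (Y' ω + Z' ω) ^ 2 - X' ω ^ 2) ν from ((iXY'.add iXZ').add iYZ').sub iX') iY',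
      integral_sub (show Integrable (fun ω => (X' ω + Y' ω) ^ 2 + (X' ω + Z' ω) ^ 2
          + (Y' ω + Z' ω) ^ 2) ν from (iXY'.add iXZ').add iYZ') iX',
      integral_add (show Integrable (fun ω => (X' ω + Y' ω) ^ 2 + (X' ω + Z' ω) ^ 2) ν from
        iXY'.add iXZ') iYZ',
      integral_add iXY' iXZ']
  have keyμ : ∫ ω, (X ω + Y ω + Z ω) ^ 2 ∂μ
      = ∫ ω, (X ω + Y ω) ^ 2 ∂μ + ∫ ω, (X ω + Z ω) ^ 2 ∂μ + ∫ ω, (Y ω + Z ω) ^ 2 ∂μ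
        - ∫ ω, X ω ^ 2 ∂μ - ∫ ω, Y ω ^ 2 ∂μ - ∫ ω, Z ω ^ 2 ∂μ := by
    rw [show (fun ω => (X ω + Y ω + Z ω) ^ 2) = fun ω =>
        (X ω + Y ω) ^ 2 + (X ω + Z ω) ^ 2 + (Y ω + Z ω) ^ 2
          - X ω ^ 2 - Y ω ^ 2 - Z ω ^ 2 from funext fun ω => expand _ _ _,
      integral_sub (show Integrable (fun ω => (X ω + Y ω) ^ 2 + (X ω + Z ω) ^ 2
          + (Y ω + Z ω) ^ 2 - X ω ^ 2 - Y ω ^ 2) μ from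
        (((iXY.add iXZ).add iYZ).sub iX).sub iY) iZ,
      integral_sub (show Integrable (fun ω => (X ω + Y ω) ^ 2 + (X ω + Z ω) ^ 2
          + (Y ω + Z ω) ^ 2 - X ω ^ 2) μ from ((iXY.add iXZ).add iYZ).sub iX) iY,
      integral_sub (show Integrable (fun ω => (X ω + Y ω) ^ 2 + (X ω + Z ω) ^ 2
          + (Y ω + Z ω) ^ 2) μ from (iXY.add iXZ).add iYZ) iX,
      integral_add (show Integrable (fun ω => (X ω + Y ω) ^ 2 + (X ω + Z ω) ^ 2) μ from
        iXY.add iXZ) iYZ,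
      integral_add iXY iXZ]
  have hμ0 : ∫ ω, (X ω + Y ω + Z ω) ^ 2 ∂μ = 0 := by
    have h0 : (fun ω => (X ω + Y ω + Z ω) ^ 2) =ᵐ[μ] fun _ => (0 : ℝ) :=
      hsum.mono fun ω h => by simp [h]
    rw [integral_congr_ae h0, integral_zero]
  have hν0 : ∫ ω, (X' ω + Y' ω + Z' ω) ^ 2 ∂ν = 0 := by
    rw [keyν, eX, eY, eZ, eXY, eXZ, eYZ, ← keyμ, hμ0]
  -- nonneg integrand with zero integral is a.e. zero
  have hkey : ∀ᵐ ω ∂ν, X' ω + Y' ω + Z' ω = 0 := by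
    have hae := (integral_eq_zero_iff_of_nonneg (fun ω => sq_nonneg _) hintS).1 hν0
    filter_upwards [hae] with ω h
    exact pow_eq_zero_iff two_ne_zero |>.mp h
  -- now conclude
  have mf : Measurable (fun p : ℝ × ℝ => (p.1, p.2, -p.1 - p.2)) :=
    measurable_fst.prodMk (measurable_snd.prodMk (measurable_fst.neg.sub measurable_snd))
  have h1 := hXY.comp mf
  have e' : (fun ω => (X' ω, Y' ω, Z' ω)) =ᵐ[ν]
      ((fun p : ℝ × ℝ => (p.1, p.2, -p.1 - p.2)) ∘ fun ω => (X' ω, Y' ω)) := by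
    filter_upwards [hkey] with ω h
    show (X' ω, Y' ω, Z' ω) = (X' ω, Y' ω, -X' ω - Y' ω)
    rw [show Z' ω = -X' ω - Y' ω by linarith]
  have e : (fun ω => (X ω, Y ω, Z ω)) =ᵐ[μ]
      ((fun p : ℝ × ℝ => (p.1, p.2, -p.1 - p.2)) ∘ fun ω => (X ω, Y ω)) := by
    filter_upwards [hsum] with ω h
    show (X ω, Y ω, Z ω) = (X ω, Y ω, -X ω - Y ω)
    rw [show Z ω = -X ω - Y ω by linarith]
  exact ⟨h1.aemeasurable_fst.congr e'.symm, h1.aemeasurable_snd.congr e.symm, by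
    rw [Measure.map_congr e', Measure.map_congr e, h1.map_eq]⟩
end

section
/- Let F be a u×m real matrix and let X be an R^m-valued random vector with F X = 0 almost surely and finite second moments. Suppose X' is an R^m-valued random vector such that A_l X' ~ A_l X (equal in distribution) for matrices A_1,...,A_L, where A_l is u_l×m. If there exists a positive definite u×u matrix C and symmetric matrices Σ_l (u_l×u_l) with F^T C F = Σ_{l=1}^L A_l^T Σ_l A_l, then F X' = 0 almost surely. -/
open MeasureTheory ProbabilityTheory Matrix

lemma aux_mul_int {α : Type*} [MeasurableSpace α] {μ : Measure α} {f g : α → ℝ}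
    (hf : MemLp f 2 μ) (hg : MemLp g 2 μ) : Integrable (fun x => f x * g x) μ := by
  refine Integrable.mono' (hf.integrable_sq.add hg.integrable_sq)
    (hf.1.mul hg.1) (Filter.Eventually.of_forall fun x => ?_)
  have h1 : |f x * g x| = |f x| * |g x| := abs_mul _ _
  simp only [Real.norm_eq_abs, h1, Pi.add_apply]
  nlinarith [sq_abs (f x), sq_abs (g x), sq_nonneg (|f x| - |g x|), abs_nonneg (f x),
    abs_nonneg (g x)]

lemma aux_memlp_sum {α : Type*} [MeasurableSpace α] {μ : Measure α} {m n : ℕ}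
    (M : Matrix (Fin n) (Fin m) ℝ) (X : α → Fin m → ℝ)
    (hX2 : ∀ i, MemLp (fun ω => X ω i) 2 μ) (i : Fin n) :
    MemLp (fun ω => M.mulVec (X ω) i) 2 μ := by
  simp only [mulVec, dotProduct]
  have := memLp_finset_sum' (μ := μ) (p := 2) Finset.univ
    (f := fun k (ω : α) => M i k * X ω k) (fun k _ => (hX2 k).const_mul (M i k))
  convert this using 1
  ext ω; simp

lemma aux_int_quad {α : Type*} [MeasurableSpace α] {μ : Measure α} {n : ℕ}
    (S : Matrix (Fin n) (Fin n) ℝ) (Y : α → Fin n → ℝ)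
    (hY : ∀ i, MemLp (fun ω => Y ω i) 2 μ) :
    Integrable (fun ω => Y ω ⬝ᵥ S.mulVec (Y ω)) μ := by
  simp only [dotProduct, mulVec, Finset.mul_sum]
  refine integrable_finset_sum _ fun i _ => integrable_finset_sum _ fun j _ => ?_
  have : (fun ω => Y ω i * (S i j * Y ω j)) = fun ω => S i j * (Y ω i * Y ω j) := by
    ext ω; ring
  rw [this]
  exact (aux_mul_int (hY i) (hY j)).const_mul _

lemma aux_quad_meas {n : ℕ} (S : Matrix (Fin n) (Fin n) ℝ) :
    Measurable (fun y : Fin n → ℝ => y ⬝ᵥ S.mulVec y) := by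
  simp only [dotProduct, mulVec]
  exact Finset.measurable_sum _ fun i _ =>
    ((measurable_pi_apply i).mul (Finset.measurable_sum _ fun j _ =>
      (measurable_pi_apply (X := fun _ : Fin n => ℝ) j).const_mul (S i j)))

lemma aux_quad_eq {m n : ℕ} (M : Matrix (Fin n) (Fin m) ℝ) (S : Matrix (Fin n) (Fin n) ℝ)
    (v : Fin m → ℝ) :
    M.mulVec v ⬝ᵥ S.mulVec (M.mulVec v) = v ⬝ᵥ (Mᵀ * S * M).mulVec v := by
  rw [dotProduct_mulVec, vecMul_mulVec, dotProduct_mulVec, vecMul_vecMul, Matrix.mul_assoc,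
    ← dotProduct_mulVec]

lemma aux_sum_quad {L m : ℕ} (M : Fin L → Matrix (Fin m) (Fin m) ℝ) (v : Fin m → ℝ) :
    v ⬝ᵥ (∑ l, M l).mulVec v = ∑ l, v ⬝ᵥ (M l).mulVec v := by
  simp only [dotProduct, mulVec, Matrix.sum_apply, Finset.sum_apply, Finset.mul_sum,
    Finset.sum_mul]
  rw [show (∑ x : Fin m, ∑ y : Fin m, ∑ l : Fin L, v x * (M l x y * v y))
      = ∑ x : Fin m, ∑ l : Fin L, ∑ y : Fin m, v x * (M l x y * v y) from
    Finset.sum_congr rfl fun x _ => Finset.sum_comm, Finset.sum_comm]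

/-- First half of the Fundamental Property of Polytope Codes: if `F X = 0` a.s.,
`Aₗ X' ~ Aₗ X` for each `l`, and `Fᵀ C F = ∑ₗ Aₗᵀ Σₗ Aₗ` for a positive definite `C`,
then `F X' = 0` a.s. -/
theorem stmt2 {Ω Ω' : Type*} [MeasurableSpace Ω] [MeasurableSpace Ω']
    (μ : Measure Ω) (ν : Measure Ω') [IsProbabilityMeasure μ] [IsProbabilityMeasure ν]
    (u m L : ℕ) (F : Matrix (Fin u) (Fin m) ℝ)
    (ul : Fin L → ℕ) (A : (l : Fin L) → Matrix (Fin (ul l)) (Fin m) ℝ)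
    (Sig : (l : Fin L) → Matrix (Fin (ul l)) (Fin (ul l)) ℝ)
    (hSig : ∀ l, (Sig l).IsSymm)
    (C : Matrix (Fin u) (Fin u) ℝ) (hC : C.PosDef)
    (heq : Fᵀ * C * F = ∑ l, (A l)ᵀ * Sig l * A l)
    (X : Ω → Fin m → ℝ) (X' : Ω' → Fin m → ℝ)
    (hXmeas : Measurable X)
    (hX2 : ∀ i, MemLp (fun ω => X ω i) 2 μ)
    (hX0 : ∀ᵐ ω ∂μ, F.mulVec (X ω) = 0)
    (hA : ∀ l, IdentDistrib (fun ω => (A l).mulVec (X' ω)) (fun ω => (A l).mulVec (X ω)) ν μ) :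
    ∀ᵐ ω ∂ν, F.mulVec (X' ω) = 0 := by
  classical
  -- quadratic form decomposition for any vector v
  have quad : ∀ v : Fin m → ℝ,
      F.mulVec v ⬝ᵥ C.mulVec (F.mulVec v)
        = ∑ l, (A l).mulVec v ⬝ᵥ (Sig l).mulVec ((A l).mulVec v) := by
    intro v
    rw [aux_quad_eq, heq, aux_sum_quad]
    exact Finset.sum_congr rfl fun l _ => (aux_quad_eq (A l) (Sig l) v).symm
  -- the quadratic form in each summand, transported by equality in distribution
  have hIdent : ∀ l, IdentDistrib
      (fun ω => (A l).mulVec (X' ω) ⬝ᵥ (Sig l).mulVec ((A l).mulVec (X' ω)))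
      (fun ω => (A l).mulVec (X ω) ⬝ᵥ (Sig l).mulVec ((A l).mulVec (X ω))) ν μ :=
    fun l => (hA l).comp (aux_quad_meas (Sig l))
  have hint : ∀ l, Integrable
      (fun ω => (A l).mulVec (X ω) ⬝ᵥ (Sig l).mulVec ((A l).mulVec (X ω))) μ :=
    fun l => aux_int_quad (Sig l) (fun ω => (A l).mulVec (X ω))
      (fun i => aux_memlp_sum (A l) X hX2 i)
  have hint' : ∀ l, Integrable
      (fun ω => (A l).mulVec (X' ω) ⬝ᵥ (Sig l).mulVec ((A l).mulVec (X' ω))) ν :=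
    fun l => ((hIdent l).integrable_iff).2 (hint l)
  -- G' is the quadratic form of C applied to F X'
  set G' : Ω' → ℝ := fun ω => F.mulVec (X' ω) ⬝ᵥ C.mulVec (F.mulVec (X' ω)) with hG'
  have hG'eq : G' = fun ω => ∑ l, (A l).mulVec (X' ω) ⬝ᵥ (Sig l).mulVec ((A l).mulVec (X' ω)) := by
    funext ω; exact quad (X' ω)
  have hG'int : Integrable G' ν := by
    rw [hG'eq]; exact integrable_finset_sum _ fun l _ => hint' l
  -- ∫ G' = 0
  have hG'zero : ∫ ω, G' ω ∂ν = 0 := by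
    rw [hG'eq, integral_finset_sum _ fun l _ => hint' l]
    have h1 : ∀ l : Fin L,
        ∫ ω, (A l).mulVec (X' ω) ⬝ᵥ (Sig l).mulVec ((A l).mulVec (X' ω)) ∂ν
          = ∫ ω, (A l).mulVec (X ω) ⬝ᵥ (Sig l).mulVec ((A l).mulVec (X ω)) ∂μ :=
      fun l => (hIdent l).integral_eq
    rw [Finset.sum_congr rfl fun l _ => h1 l,
      ← integral_finset_sum _ fun l _ => hint l]
    have h2 : (fun ω => ∑ l, (A l).mulVec (X ω) ⬝ᵥ (Sig l).mulVec ((A l).mulVec (X ω)))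
        =ᵐ[μ] 0 := by
      filter_upwards [hX0] with ω hω
      rw [← quad (X ω), hω]
      simp
    rw [integral_congr_ae h2]
    simp
  -- G' is nonnegative
  have hG'nonneg : 0 ≤ G' := by
    intro ω
    have := hC.posSemidef.dotProduct_mulVec_nonneg (F.mulVec (X' ω))
    simp only [star_trivial] at this
    exact this
  -- so G' = 0 a.e.
  have hae : G' =ᵐ[ν] 0 := (integral_eq_zero_iff_of_nonneg hG'nonneg hG'int).1 hG'zero
  filter_upwards [hae] with ω hω
  by_contra hne
  have := hC.dotProduct_mulVec_pos (x := F.mulVec (X' ω)) hne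
  simp only [star_trivial] at this
  rw [show (F.mulVec (X' ω) ⬝ᵥ C.mulVec (F.mulVec (X' ω))) = G' ω from rfl, hω] at this
  simp at this
end

section
/- Let F be a u×m real matrix and X an R^m-valued random vector with F X = 0 a.s. and finite second moments. Suppose X' satisfies A_l X' ~ A_l X for l = 1,...,L. If (1) there exist a positive definite C and matrices Σ_l with F^T C F = Σ_l A_l^T Σ_l A_l, and (2) there exists l* such that the stacked matrix [F; A_{l*}] has full column rank m, then X' ~ X (equality of distributions of the full vectors). -/
open MeasureTheory ProbabilityTheory Matrix

/-- Product of two L² functions is integrable. -/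
lemma polytope_integrable_mul_of_memL2 {Ω : Type*} [MeasurableSpace Ω] {μ : Measure Ω}
    {f g : Ω → ℝ} (hf : MemLp f 2 μ) (hg : MemLp g 2 μ) :
    Integrable (fun ω => f ω * g ω) μ := by
  rw [← memLp_one_iff_integrable]
  have h := hg.smul (φ := f) (r := 1) hf (hpqr := ⟨by rw [ENNReal.inv_two_add_inv_two]; simp⟩)
  exact h

/-- The quadratic-form rewriting: `v ⬝ᵥ (Bᵀ N B) v = (Bv) ⬝ᵥ N (Bv)`. -/
lemma polytope_quad {k m : ℕ} (B : Matrix (Fin k) (Fin m) ℝ) (N : Matrix (Fin k) (Fin k) ℝ)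
    (v : Fin m → ℝ) :
    v ⬝ᵥ (Bᵀ * N * B).mulVec v = (B.mulVec v) ⬝ᵥ N.mulVec (B.mulVec v) := by
  rw [← Matrix.mulVec_mulVec, ← Matrix.mulVec_mulVec, Matrix.dotProduct_mulVec,
    Matrix.vecMul_transpose]

/-- A quadratic form on `Fin k → ℝ` is measurable. -/
lemma polytope_quad_meas {k : ℕ} (N : Matrix (Fin k) (Fin k) ℝ) :
    Measurable (fun w : Fin k → ℝ => w ⬝ᵥ N.mulVec w) := by
  simp only [dotProduct, Matrix.mulVec]
  exact Finset.measurable_sum _ fun i _ =>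
    (measurable_pi_apply i).mul <| Finset.measurable_sum _ fun j _ =>
      measurable_const.mul (measurable_pi_apply j)

/-- Fundamental Property of Polytope Codes (Theorem 3): if `F X = 0` a.s.,
`Aₗ X' ~ Aₗ X` for each `l`, `Fᵀ C F = ∑ₗ Aₗᵀ Σₗ Aₗ` for a positive definite `C`,
and the stacked matrix `[F; A_{l*}]` has full column rank for some `l*`,
then `X' ~ X`. -/
theorem stmt3 {Ω Ω' : Type*} [MeasurableSpace Ω] [MeasurableSpace Ω']
    (μ : Measure Ω) (ν : Measure Ω') [IsProbabilityMeasure μ] [IsProbabilityMeasure ν]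
    (u m L : ℕ) (F : Matrix (Fin u) (Fin m) ℝ)
    (ul : Fin L → ℕ) (A : (l : Fin L) → Matrix (Fin (ul l)) (Fin m) ℝ)
    (Sig : (l : Fin L) → Matrix (Fin (ul l)) (Fin (ul l)) ℝ)
    (hSig : ∀ l, (Sig l).IsSymm)
    (C : Matrix (Fin u) (Fin u) ℝ) (hC : C.PosDef)
    (heq : Fᵀ * C * F = ∑ l, (A l)ᵀ * Sig l * A l)
    (lstar : Fin L) (hrank : (Matrix.fromRows F (A lstar)).rank = m)
    (X : Ω → Fin m → ℝ) (X' : Ω' → Fin m → ℝ)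
    (hXmeas : Measurable X)
    (hX2 : ∀ i, MemLp (fun ω => X ω i) 2 μ)
    (hX0 : ∀ᵐ ω ∂μ, F.mulVec (X ω) = 0)
    (hA : ∀ l, IdentDistrib (fun ω => (A l).mulVec (X' ω)) (fun ω => (A l).mulVec (X ω)) ν μ) :
    IdentDistrib X' X ν μ := by
  classical
  set M : Matrix (Fin u ⊕ Fin (ul lstar)) (Fin m) ℝ := Matrix.fromRows F (A lstar) with hM
  -- Step 1: left inverse of M
  have hker : LinearMap.ker M.mulVecLin = ⊥ := by
    have hrn := M.mulVecLin.finrank_range_add_finrank_ker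
    rw [show Module.finrank ℝ (LinearMap.range M.mulVecLin) = m from hrank] at hrn
    simp only [Module.finrank_pi, Fintype.card_fin] at hrn
    have h0 : Module.finrank ℝ (LinearMap.ker M.mulVecLin) = 0 := by omega
    exact Submodule.finrank_eq_zero.mp h0
  obtain ⟨g, hg⟩ := M.mulVecLin.exists_leftInverse_of_injective hker
  -- quadratic form identity
  have quad : ∀ v : Fin m → ℝ,
      (F.mulVec v) ⬝ᵥ C.mulVec (F.mulVec v)
        = ∑ l, ((A l).mulVec v) ⬝ᵥ (Sig l).mulVec ((A l).mulVec v) := by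
    intro v
    have hmv : (∑ l, (A l)ᵀ * Sig l * A l).mulVec v
        = ∑ l, ((A l)ᵀ * Sig l * A l).mulVec v := by
      ext i
      simp only [Matrix.mulVec, dotProduct, Finset.sum_apply, Matrix.sum_apply, Finset.sum_mul]
      rw [Finset.sum_comm]
    have hsum : v ⬝ᵥ (∑ l, (A l)ᵀ * Sig l * A l).mulVec v
        = ∑ l, v ⬝ᵥ ((A l)ᵀ * Sig l * A l).mulVec v := by
      rw [hmv]
      simp only [dotProduct, Finset.sum_apply, Matrix.sum_apply, Finset.mul_sum]
      rw [Finset.sum_comm]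
    calc (F.mulVec v) ⬝ᵥ C.mulVec (F.mulVec v)
        = v ⬝ᵥ (Fᵀ * C * F).mulVec v := (polytope_quad F C v).symm
      _ = ∑ l, v ⬝ᵥ ((A l)ᵀ * Sig l * A l).mulVec v := by rw [heq, hsum]
      _ = ∑ l, ((A l).mulVec v) ⬝ᵥ (Sig l).mulVec ((A l).mulVec v) :=
          Finset.sum_congr rfl fun l _ => polytope_quad (A l) (Sig l) v
  -- integrable quadratic functionals of X
  have gint : ∀ l : Fin L, Integrable
      (fun ω => ((A l).mulVec (X ω)) ⬝ᵥ (Sig l).mulVec ((A l).mulVec (X ω))) μ := by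
    intro l
    have hrw : (fun ω => ((A l).mulVec (X ω)) ⬝ᵥ (Sig l).mulVec ((A l).mulVec (X ω)))
        = fun ω => ∑ i, ∑ j, X ω i * (((A l)ᵀ * Sig l * A l) i j * X ω j) := by
      funext ω
      rw [← polytope_quad (A l) (Sig l) (X ω)]
      simp [dotProduct, Matrix.mulVec, Finset.mul_sum]
    rw [hrw]
    refine integrable_finset_sum _ fun i _ => integrable_finset_sum _ fun j _ => ?_
    exact polytope_integrable_mul_of_memL2 (hX2 i) ((hX2 j).const_mul _)
  -- identically distributed quadratic functionals of X'
  have idd : ∀ l : Fin L, IdentDistrib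
      (fun ω => ((A l).mulVec (X' ω)) ⬝ᵥ (Sig l).mulVec ((A l).mulVec (X' ω)))
      (fun ω => ((A l).mulVec (X ω)) ⬝ᵥ (Sig l).mulVec ((A l).mulVec (X ω))) ν μ :=
    fun l => (hA l).comp (polytope_quad_meas (Sig l))
  have fint : ∀ l : Fin L, Integrable
      (fun ω => ((A l).mulVec (X' ω)) ⬝ᵥ (Sig l).mulVec ((A l).mulVec (X' ω))) ν :=
    fun l => (idd l).integrable_iff.mpr (gint l)
  -- the nonnegative quadratic form in F X'
  set q' : Ω' → ℝ := fun ω => (F.mulVec (X' ω)) ⬝ᵥ C.mulVec (F.mulVec (X' ω)) with hq'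
  have hq'sum : q' = fun ω =>
      ∑ l, ((A l).mulVec (X' ω)) ⬝ᵥ (Sig l).mulVec ((A l).mulVec (X' ω)) := by
    funext ω; exact quad (X' ω)
  have hq'int : Integrable q' ν := by
    rw [hq'sum]; exact integrable_finset_sum _ fun l _ => fint l
  have hq'nonneg : 0 ≤ q' := by
    intro ω
    simpa only [star_trivial, Pi.zero_apply, hq'] using hC.posSemidef.dotProduct_mulVec_nonneg (F.mulVec (X' ω))
  -- the integral of q' is zero
  have hq'zero : ∫ ω, q' ω ∂ν = 0 := by
    rw [hq'sum]
    rw [integral_finset_sum _ fun l _ => fint l]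
    have h1 : ∀ l : Fin L,
        (∫ ω, ((A l).mulVec (X' ω)) ⬝ᵥ (Sig l).mulVec ((A l).mulVec (X' ω)) ∂ν)
          = ∫ ω, ((A l).mulVec (X ω)) ⬝ᵥ (Sig l).mulVec ((A l).mulVec (X ω)) ∂μ :=
      fun l => (idd l).integral_eq
    simp_rw [h1]
    rw [← integral_finset_sum _ fun l _ => gint l]
    have : (fun ω => ∑ l, ((A l).mulVec (X ω)) ⬝ᵥ (Sig l).mulVec ((A l).mulVec (X ω)))
        =ᵐ[μ] fun _ => (0 : ℝ) := by
      filter_upwards [hX0] with ω h0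
      rw [← quad (X ω), h0]
      simp
    rw [integral_congr_ae this]
    simp
  -- hence q' = 0 a.e., hence F X' = 0 a.e.
  have hq'ae : q' =ᵐ[ν] 0 :=
    ((integral_eq_zero_iff_of_nonneg hq'nonneg hq'int).mp hq'zero)
  have hFX' : ∀ᵐ ω ∂ν, F.mulVec (X' ω) = 0 := by
    filter_upwards [hq'ae] with ω h0
    by_contra hne
    have := hC.dotProduct_mulVec_pos hne
    simp only [star_trivial] at this
    rw [show ((0:Ω'→ℝ) ω) = (0:ℝ) from rfl] at h0
    rw [hq'] at h0
    simp only at h0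
    linarith
  -- step 3: recover X' and X from A lstar via the left inverse
  set φ : (Fin (ul lstar) → ℝ) → (Fin m → ℝ) := fun w => g (Sum.elim 0 w) with hφ
  have hφmeas : Measurable φ := by
    have h1 : Measurable (fun w : Fin (ul lstar) → ℝ =>
        (Sum.elim 0 w : Fin u ⊕ Fin (ul lstar) → ℝ)) := by
      refine measurable_pi_lambda _ fun i => ?_
      cases i with
      | inl i => exact measurable_const
      | inr i => exact measurable_pi_apply i
    exact (LinearMap.continuous_of_finiteDimensional g).measurable.comp h1
  have key : ∀ (v : Fin m → ℝ), F.mulVec v = 0 → φ ((A lstar).mulVec v) = v := by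
    intro v hv
    have h1 : M.mulVec v = Sum.elim (F.mulVec v) ((A lstar).mulVec v) :=
      Matrix.fromRows_mulVec F (A lstar) v
    have h2 : g (M.mulVecLin v) = v := by
      have := LinearMap.congr_fun hg v
      simpa using this
    rw [hφ]
    simp only
    rw [← hv, ← h1]
    exact h2
  have hX'eq : X' =ᵐ[ν] fun ω => φ ((A lstar).mulVec (X' ω)) := by
    filter_upwards [hFX'] with ω h0
    exact (key (X' ω) h0).symm
  have hXeq : X =ᵐ[μ] fun ω => φ ((A lstar).mulVec (X ω)) := by
    filter_upwards [hX0] with ω h0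
    exact (key (X ω) h0).symm
  have iddφ : IdentDistrib (fun ω => φ ((A lstar).mulVec (X' ω)))
      (fun ω => φ ((A lstar).mulVec (X ω))) ν μ := (hA lstar).comp hφmeas
  exact
    { aemeasurable_fst := iddφ.aemeasurable_fst.congr hX'eq.symm
      aemeasurable_snd := hXmeas.aemeasurable
      map_eq := by
        rw [Measure.map_congr hX'eq, Measure.map_congr hXeq, iddφ.map_eq] }
end

section
/- Let F be a 1×m integer row vector with all entries nonzero, and let X be an R^m random vector with F X = 0 a.s. and finite second moments. Suppose X' satisfies: (X'_i, X'_j) ~ (X_i, X_j) for all pairs i,j, and (X'_2,...,X'_m) ~ (X_2,...,X_m). Then X' ~ X. -/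
open MeasureTheory ProbabilityTheory

/-- Corollary 1 of the Fundamental Property of Polytope Codes: a single linear
constraint with all-nonzero integer coefficients, all pairwise marginals matching,
and the joint distribution of the last `m-1` coordinates matching, force `X' ~ X`. -/
theorem stmt4 {Ω Ω' : Type*} [MeasurableSpace Ω] [MeasurableSpace Ω']
    (μ : Measure Ω) (ν : Measure Ω') [IsProbabilityMeasure μ] [IsProbabilityMeasure ν]
    (m : ℕ) (F : Fin m → ℤ) (hF : ∀ i, F i ≠ 0)
    (X : Ω → Fin m → ℝ) (X' : Ω' → Fin m → ℝ)
    (hXmeas : Measurable X)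
    (hX2 : ∀ i, MemLp (fun ω => X ω i) 2 μ)
    (hX0 : ∀ᵐ ω ∂μ, ∑ i, (F i : ℝ) * X ω i = 0)
    (hpairs : ∀ i j : Fin m,
      IdentDistrib (fun ω => (X' ω i, X' ω j)) (fun ω => (X ω i, X ω j)) ν μ)
    (htail : IdentDistrib
      (fun ω => fun i : {i : Fin m // (i : ℕ) ≠ 0} => X' ω i)
      (fun ω => fun i : {i : Fin m // (i : ℕ) ≠ 0} => X ω i) ν μ) :
    IdentDistrib X' X ν μ := by
  rcases Nat.eq_zero_or_pos m with hm | hm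
  · subst hm
    have hX' : X' = fun _ => (fun i => i.elim0 : Fin 0 → ℝ) := by
      funext ω; exact funext fun i => i.elim0
    have hX : X = fun _ => (fun i => i.elim0 : Fin 0 → ℝ) := by
      funext ω; exact funext fun i => i.elim0
    rw [hX', hX]
    refine ⟨measurable_const.aemeasurable, measurable_const.aemeasurable, ?_⟩
    simp [Measure.map_const]
  -- main case
  set i0 : Fin m := ⟨0, hm⟩ with hi0
  have hF0 : ((F i0 : ℝ)) ≠ 0 := by exact_mod_cast Int.cast_ne_zero.mpr (hF i0)
  -- integrability of products
  have hXint : ∀ i j, Integrable (fun ω => X ω i * X ω j) μ := by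
    intro i j
    have := ((hX2 j).smul (hX2 i) (p := 2) (q := 2) (r := 1) (hpqr := ⟨by rw [inv_one]; exact ENNReal.inv_two_add_inv_two⟩)).integrable le_rfl
    simpa [Pi.smul_apply, smul_eq_mul, mul_comm, Pi.mul_def] using this
  have hpairmul : ∀ i j, IdentDistrib (fun ω => X' ω i * X' ω j)
      (fun ω => X ω i * X ω j) ν μ := fun i j =>
    (hpairs i j).comp (measurable_fst.mul measurable_snd)
  have hX'int : ∀ i j, Integrable (fun ω => X' ω i * X' ω j) ν := fun i j =>
    ((hpairmul i j).integrable_iff).mpr (hXint i j)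
  -- expansion of squares
  have hexp : ∀ (Y : Fin m → ℝ), (∑ i, (F i : ℝ) * Y i) ^ 2
      = ∑ i, ∑ j, ((F i : ℝ) * (F j : ℝ)) * (Y i * Y j) := by
    intro Y
    rw [sq, Finset.sum_mul_sum]
    exact Finset.sum_congr rfl fun i _ => Finset.sum_congr rfl fun j _ => by ring
  have hSint : Integrable (fun ω => (∑ i, (F i : ℝ) * X' ω i) ^ 2) ν := by
    simp only [hexp]
    exact integrable_finset_sum _ fun i _ =>
      integrable_finset_sum _ fun j _ => (hX'int i j).const_mul _
  -- ∫ (∑ F X')² = ∫ (∑ F X)² = 0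
  have hIS' : ∫ ω, (∑ i, (F i : ℝ) * X' ω i) ^ 2 ∂ν = 0 := by
    have e1 : ∫ ω, (∑ i, (F i : ℝ) * X' ω i) ^ 2 ∂ν
        = ∑ i, ∑ j, ((F i : ℝ) * (F j : ℝ)) * ∫ ω, X' ω i * X' ω j ∂ν := by
      simp only [hexp]
      rw [integral_finset_sum _ fun i _ =>
        integrable_finset_sum _ fun j _ => (hX'int i j).const_mul _]
      refine Finset.sum_congr rfl fun i _ => ?_
      rw [integral_finset_sum _ fun j _ => (hX'int i j).const_mul _]
      exact Finset.sum_congr rfl fun j _ => integral_const_mul _ _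
    have e2 : ∫ ω, (∑ i, (F i : ℝ) * X ω i) ^ 2 ∂μ
        = ∑ i, ∑ j, ((F i : ℝ) * (F j : ℝ)) * ∫ ω, X ω i * X ω j ∂μ := by
      simp only [hexp]
      rw [integral_finset_sum _ fun i _ =>
        integrable_finset_sum _ fun j _ => (hXint i j).const_mul _]
      refine Finset.sum_congr rfl fun i _ => ?_
      rw [integral_finset_sum _ fun j _ => (hXint i j).const_mul _]
      exact Finset.sum_congr rfl fun j _ => integral_const_mul _ _
    have e3 : ∫ ω, (∑ i, (F i : ℝ) * X ω i) ^ 2 ∂μ = 0 := by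
      have : (fun ω => (∑ i, (F i : ℝ) * X ω i) ^ 2) =ᵐ[μ] fun _ => (0 : ℝ) :=
        hX0.mono fun ω h => by simp [h]
      rw [integral_congr_ae this, integral_zero]
    rw [e1]
    rw [e2] at e3
    rw [← e3]
    exact Finset.sum_congr rfl fun i _ => Finset.sum_congr rfl fun j _ => by
      rw [(hpairmul i j).integral_eq]
  -- hence the linear constraint holds a.e. for X'
  have hX'0 : ∀ᵐ ω ∂ν, ∑ i, (F i : ℝ) * X' ω i = 0 := by
    have hnn : 0 ≤ᵐ[ν] fun ω => (∑ i, (F i : ℝ) * X' ω i) ^ 2 :=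
      Filter.Eventually.of_forall fun ω => sq_nonneg _
    have h0 := (integral_eq_zero_iff_of_nonneg_ae hnn hSint).mp hIS'
    filter_upwards [h0] with ω h
    exact (pow_eq_zero_iff two_ne_zero).mp (by simpa using h)
  -- the reconstruction map
  set g : ({i : Fin m // (i : ℕ) ≠ 0} → ℝ) → Fin m → ℝ := fun v i =>
    if h : (i : ℕ) = 0 then
      -(∑ j : {i : Fin m // (i : ℕ) ≠ 0}, (F j : ℝ) * v j) / (F i0 : ℝ)
    else v ⟨i, h⟩ with hg
  have hgmeas : Measurable g := by
    refine measurable_pi_lambda _ fun i => ?_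
    by_cases h : (i : ℕ) = 0
    · simp only [hg, h, dif_pos]
      exact (Finset.measurable_sum _ fun j _ =>
        (measurable_pi_apply j).const_mul _).neg.div_const _
    · simp only [hg, h, dif_neg, not_false_iff]
      exact measurable_pi_apply _
  -- splitting the sum
  have hsplit : ∀ (Y : Fin m → ℝ), ∑ i, (F i : ℝ) * Y i
      = (F i0 : ℝ) * Y i0 + ∑ j : {i : Fin m // (i : ℕ) ≠ 0}, (F j : ℝ) * Y j := by
    intro Y
    rw [← Finset.add_sum_erase _ _ (Finset.mem_univ i0)]
    congr 1
    refine (Finset.sum_subtype _ (fun x => ?_) _)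
    simp [Finset.mem_erase, hi0, Fin.ext_iff]
  -- a.e. equality with g of the tail
  have hptwise : ∀ (Y : Fin m → ℝ), (∑ i, (F i : ℝ) * Y i = 0) →
      Y = g (fun j : {i : Fin m // (i : ℕ) ≠ 0} => Y j) := by
    intro Y h
    funext i
    by_cases hi : (i : ℕ) = 0
    · have hii : i = i0 := Fin.ext hi
      subst hii
      simp only [hg, dif_pos hi]
      rw [hsplit Y] at h
      field_simp
      linarith
    · simp only [hg, dif_neg hi]
  have h1 : X' =ᵐ[ν] fun ω => g (fun j : {i : Fin m // (i : ℕ) ≠ 0} => X' ω j) := by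
    filter_upwards [hX'0] with ω h using hptwise (X' ω) h
  have h2 : X =ᵐ[μ] fun ω => g (fun j : {i : Fin m // (i : ℕ) ≠ 0} => X ω j) := by
    filter_upwards [hX0] with ω h using hptwise (X ω) h
  have hX'meas : AEMeasurable X' ν :=
    (hgmeas.comp_aemeasurable htail.aemeasurable_fst).congr h1.symm
  refine ⟨hX'meas, hXmeas.aemeasurable, ?_⟩
  calc ν.map X'
      = ν.map (fun ω => g (fun j : {i : Fin m // (i : ℕ) ≠ 0} => X' ω j)) :=
        Measure.map_congr h1
    _ = μ.map (fun ω => g (fun j : {i : Fin m // (i : ℕ) ≠ 0} => X ω j)) :=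
        (htail.comp hgmeas).map_eq
    _ = μ.map X := (Measure.map_congr h2).symm
end

section
/- Let F be a 2×m real matrix (m ≥ 4) such that every 2×2 submatrix of F is invertible, and let X be an R^m random vector with F X = 0 a.s. and finite second moments. Write Z = (X_5,...,X_m). Suppose X' satisfies: (X'_1,X'_2,Z') ~ (X_1,X_2,Z), (X'_3,X'_4,Z') ~ (X_3,X_4,Z), (X'_1,X'_3) ~ (X_1,X_3), (X'_2,X'_4) ~ (X_2,X_4), and (X'_1,X'_4) ~ (X_1,X_4). Then X' ~ X. -/
open MeasureTheory ProbabilityTheory Matrix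

lemma aux_zero {α : Type*} [MeasurableSpace α] {μ : Measure α} {f : α → ℝ}
    (hi : Integrable (fun x => f x ^ 2) μ) (h0 : ∫ x, f x ^ 2 ∂μ = 0) :
    ∀ᵐ x ∂μ, f x = 0 := by
  have := (integral_eq_zero_iff_of_nonneg (fun x => sq_nonneg (f x)) hi).mp h0
  filter_upwards [this] with x hx
  have : f x ^ 2 = 0 := hx
  exact pow_eq_zero_iff (two_ne_zero) |>.mp this

lemma aux_expand {α : Type*} [MeasurableSpace α] {μ : Measure α} {n : ℕ} (w : Fin n → ℝ)
    {Y : α → Fin n → ℝ} (hY : ∀ i, MemLp (fun ω => Y ω i) 2 μ) :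
    ∫ ω, (∑ i, w i * Y ω i) ^ 2 ∂μ
      = ∑ i, ∑ j, (w i * w j) * ∫ ω, Y ω i * Y ω j ∂μ := by
  have hint : ∀ i j : Fin n, Integrable (fun ω => (w i * w j) * (Y ω i * Y ω j)) μ :=
    fun i j => (aux_mul_int (hY i) (hY j)).const_mul _
  calc ∫ ω, (∑ i, w i * Y ω i) ^ 2 ∂μ
      = ∫ ω, ∑ i, ∑ j, (w i * w j) * (Y ω i * Y ω j) ∂μ := by
        congr 1; funext ω
        rw [sq, Finset.sum_mul_sum]
        exact Finset.sum_congr rfl fun i _ => Finset.sum_congr rfl fun j _ => by ring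
    _ = ∑ i, ∑ j, ∫ ω, (w i * w j) * (Y ω i * Y ω j) ∂μ := by
        rw [integral_finset_sum _ fun i _ => integrable_finset_sum _ fun j _ => hint i j]
        exact Finset.sum_congr rfl fun i _ => integral_finset_sum _ fun j _ => hint i j
    _ = ∑ i, ∑ j, (w i * w j) * ∫ ω, Y ω i * Y ω j ∂μ := by
        exact Finset.sum_congr rfl fun i _ => Finset.sum_congr rfl fun j _ =>
          integral_const_mul _ _

set_option maxHeartbeats 4000000

/-- Corollary 2 of the Fundamental Property of Polytope Codes. `F` is a `2 × m` matrix
(`m ≥ 4`) all of whose `2 × 2` submatrices are nonsingular, `F X = 0` a.s., and the five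
marginal constraints on `X'` (with `Z = (X_5,…,X_m)`) force `X' ~ X`. -/
theorem stmt5 {Ω Ω' : Type*} [MeasurableSpace Ω] [MeasurableSpace Ω']
    (μ : Measure Ω) (ν : Measure Ω') [IsProbabilityMeasure μ] [IsProbabilityMeasure ν]
    (m : ℕ) (hm : 4 ≤ m) (F : Matrix (Fin 2) (Fin m) ℝ)
    (hF : ∀ i j : Fin m, i ≠ j → (F.submatrix id ![i, j]).det ≠ 0)
    (X : Ω → Fin m → ℝ) (X' : Ω' → Fin m → ℝ)
    (hXmeas : Measurable X)
    (hX2 : ∀ i, MemLp (fun ω => X ω i) 2 μ)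
    (hX0 : ∀ᵐ ω ∂μ, F.mulVec (X ω) = 0)
    (h12Z : IdentDistrib
      (fun ω => (X' ω ⟨0, by omega⟩, X' ω ⟨1, by omega⟩,
        fun i : {i : Fin m // 4 ≤ (i : ℕ)} => X' ω i))
      (fun ω => (X ω ⟨0, by omega⟩, X ω ⟨1, by omega⟩,
        fun i : {i : Fin m // 4 ≤ (i : ℕ)} => X ω i)) ν μ)
    (h34Z : IdentDistrib
      (fun ω => (X' ω ⟨2, by omega⟩, X' ω ⟨3, by omega⟩,
        fun i : {i : Fin m // 4 ≤ (i : ℕ)} => X' ω i))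
      (fun ω => (X ω ⟨2, by omega⟩, X ω ⟨3, by omega⟩,
        fun i : {i : Fin m // 4 ≤ (i : ℕ)} => X ω i)) ν μ)
    (h13 : IdentDistrib (fun ω => (X' ω ⟨0, by omega⟩, X' ω ⟨2, by omega⟩))
      (fun ω => (X ω ⟨0, by omega⟩, X ω ⟨2, by omega⟩)) ν μ)
    (h24 : IdentDistrib (fun ω => (X' ω ⟨1, by omega⟩, X' ω ⟨3, by omega⟩))
      (fun ω => (X ω ⟨1, by omega⟩, X ω ⟨3, by omega⟩)) ν μ)
    (h14 : IdentDistrib (fun ω => (X' ω ⟨0, by omega⟩, X' ω ⟨3, by omega⟩))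
      (fun ω => (X ω ⟨0, by omega⟩, X ω ⟨3, by omega⟩)) ν μ) :
    IdentDistrib X' X ν μ := by
  classical
  set n0 : Fin m := ⟨0, by omega⟩ with hn0
  set n1 : Fin m := ⟨1, by omega⟩ with hn1
  set n2 : Fin m := ⟨2, by omega⟩ with hn2
  set n3 : Fin m := ⟨3, by omega⟩ with hn3
  have n12 : n1 ≠ n2 := Fin.ne_of_val_ne (by norm_num)
  have n23 : n2 ≠ n3 := Fin.ne_of_val_ne (by norm_num)
  -- selectors
  have sel12 : ∀ i : Fin m, (i = n0 ∨ i = n1 ∨ 4 ≤ (i : ℕ)) →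
      ∃ s : ℝ × ℝ × ({k : Fin m // 4 ≤ (k : ℕ)} → ℝ) → ℝ, Measurable s ∧
        ∀ Y : Fin m → ℝ, s (Y n0, Y n1, fun k : {k : Fin m // 4 ≤ (k : ℕ)} => Y k) = Y i := by
    rintro i (rfl | rfl | hi)
    · exact ⟨fun p => p.1, measurable_fst, fun Y => rfl⟩
    · exact ⟨fun p => p.2.1, measurable_fst.comp measurable_snd, fun Y => rfl⟩
    · exact ⟨fun p => p.2.2 ⟨i, hi⟩,
        (measurable_pi_apply _).comp (measurable_snd.comp measurable_snd), fun Y => rfl⟩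
  have sel34 : ∀ i : Fin m, (i = n2 ∨ i = n3 ∨ 4 ≤ (i : ℕ)) →
      ∃ s : ℝ × ℝ × ({k : Fin m // 4 ≤ (k : ℕ)} → ℝ) → ℝ, Measurable s ∧
        ∀ Y : Fin m → ℝ, s (Y n2, Y n3, fun k : {k : Fin m // 4 ≤ (k : ℕ)} => Y k) = Y i := by
    rintro i (rfl | rfl | hi)
    · exact ⟨fun p => p.1, measurable_fst, fun Y => rfl⟩
    · exact ⟨fun p => p.2.1, measurable_fst.comp measurable_snd, fun Y => rfl⟩
    · exact ⟨fun p => p.2.2 ⟨i, hi⟩,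
        (measurable_pi_apply _).comp (measurable_snd.comp measurable_snd), fun Y => rfl⟩
  have pair12 : ∀ i j : Fin m, (i = n0 ∨ i = n1 ∨ 4 ≤ (i : ℕ)) →
      (j = n0 ∨ j = n1 ∨ 4 ≤ (j : ℕ)) →
      IdentDistrib (fun ω => (X' ω i, X' ω j)) (fun ω => (X ω i, X ω j)) ν μ := by
    intro i j hi hj
    obtain ⟨si, hsi, psi⟩ := sel12 i hi
    obtain ⟨sj, hsj, psj⟩ := sel12 j hj
    have e1 : (fun ω => (X' ω i, X' ω j)) = (fun ω =>
        (si (X' ω n0, X' ω n1, fun k : {k : Fin m // 4 ≤ (k : ℕ)} => X' ω k),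
         sj (X' ω n0, X' ω n1, fun k : {k : Fin m // 4 ≤ (k : ℕ)} => X' ω k))) := by
      funext ω; rw [psi (X' ω), psj (X' ω)]
    have e2 : (fun ω => (X ω i, X ω j)) = (fun ω =>
        (si (X ω n0, X ω n1, fun k : {k : Fin m // 4 ≤ (k : ℕ)} => X ω k),
         sj (X ω n0, X ω n1, fun k : {k : Fin m // 4 ≤ (k : ℕ)} => X ω k))) := by
      funext ω; rw [psi (X ω), psj (X ω)]
    rw [e1, e2]
    exact h12Z.comp (hsi.prodMk hsj)
  have pair34 : ∀ i j : Fin m, (i = n2 ∨ i = n3 ∨ 4 ≤ (i : ℕ)) →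
      (j = n2 ∨ j = n3 ∨ 4 ≤ (j : ℕ)) →
      IdentDistrib (fun ω => (X' ω i, X' ω j)) (fun ω => (X ω i, X ω j)) ν μ := by
    intro i j hi hj
    obtain ⟨si, hsi, psi⟩ := sel34 i hi
    obtain ⟨sj, hsj, psj⟩ := sel34 j hj
    have e1 : (fun ω => (X' ω i, X' ω j)) = (fun ω =>
        (si (X' ω n2, X' ω n3, fun k : {k : Fin m // 4 ≤ (k : ℕ)} => X' ω k),
         sj (X' ω n2, X' ω n3, fun k : {k : Fin m // 4 ≤ (k : ℕ)} => X' ω k))) := by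
      funext ω; rw [psi (X' ω), psj (X' ω)]
    have e2 : (fun ω => (X ω i, X ω j)) = (fun ω =>
        (si (X ω n2, X ω n3, fun k : {k : Fin m // 4 ≤ (k : ℕ)} => X ω k),
         sj (X ω n2, X ω n3, fun k : {k : Fin m // 4 ≤ (k : ℕ)} => X ω k))) := by
      funext ω; rw [psi (X ω), psj (X ω)]
    rw [e1, e2]
    exact h34Z.comp (hsi.prodMk hsj)
  have sw : ∀ (A B : Ω' → ℝ) (C D : Ω → ℝ),
      IdentDistrib (fun ω => (A ω, B ω)) (fun ω => (C ω, D ω)) ν μ →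
      IdentDistrib (fun ω => (B ω, A ω)) (fun ω => (D ω, C ω)) ν μ := by
    intro A B C D hid
    exact hid.comp measurable_swap
  have cat : ∀ i : Fin m, i = n0 ∨ i = n1 ∨ i = n2 ∨ i = n3 ∨ 4 ≤ (i : ℕ) := by
    intro i
    rcases Nat.lt_or_ge (i : ℕ) 4 with h | h
    · have : (i : ℕ) = 0 ∨ (i : ℕ) = 1 ∨ (i : ℕ) = 2 ∨ (i : ℕ) = 3 := by omega
      rcases this with h | h | h | h
      · exact Or.inl (Fin.ext h)
      · exact Or.inr (Or.inl (Fin.ext h))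
      · exact Or.inr (Or.inr (Or.inl (Fin.ext h)))
      · exact Or.inr (Or.inr (Or.inr (Or.inl (Fin.ext h))))
    · exact Or.inr (Or.inr (Or.inr (Or.inr h)))
  have pair : ∀ i j : Fin m, ¬(i = n1 ∧ j = n2) → ¬(i = n2 ∧ j = n1) →
      IdentDistrib (fun ω => (X' ω i, X' ω j)) (fun ω => (X ω i, X ω j)) ν μ := by
    intro i j hij hji
    rcases cat i with rfl | rfl | rfl | rfl | hi <;> rcases cat j with rfl | rfl | rfl | rfl | hj
    · exact pair12 _ _ (Or.inl rfl) (Or.inl rfl)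
    · exact pair12 _ _ (Or.inl rfl) (Or.inr (Or.inl rfl))
    · exact h13
    · exact h14
    · exact pair12 _ _ (Or.inl rfl) (Or.inr (Or.inr hj))
    · exact pair12 _ _ (Or.inr (Or.inl rfl)) (Or.inl rfl)
    · exact pair12 _ _ (Or.inr (Or.inl rfl)) (Or.inr (Or.inl rfl))
    · exact absurd ⟨rfl, rfl⟩ hij
    · exact h24
    · exact pair12 _ _ (Or.inr (Or.inl rfl)) (Or.inr (Or.inr hj))
    · exact sw _ _ _ _ h13
    · exact absurd ⟨rfl, rfl⟩ hji
    · exact pair34 _ _ (Or.inl rfl) (Or.inl rfl)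
    · exact pair34 _ _ (Or.inl rfl) (Or.inr (Or.inl rfl))
    · exact pair34 _ _ (Or.inl rfl) (Or.inr (Or.inr hj))
    · exact sw _ _ _ _ h14
    · exact sw _ _ _ _ h24
    · exact pair34 _ _ (Or.inr (Or.inl rfl)) (Or.inl rfl)
    · exact pair34 _ _ (Or.inr (Or.inl rfl)) (Or.inr (Or.inl rfl))
    · exact pair34 _ _ (Or.inr (Or.inl rfl)) (Or.inr (Or.inr hj))
    · exact pair12 _ _ (Or.inr (Or.inr hi)) (Or.inl rfl)
    · exact pair12 _ _ (Or.inr (Or.inr hi)) (Or.inr (Or.inl rfl))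
    · exact pair34 _ _ (Or.inr (Or.inr hi)) (Or.inl rfl)
    · exact pair34 _ _ (Or.inr (Or.inr hi)) (Or.inr (Or.inl rfl))
    · exact pair12 _ _ (Or.inr (Or.inr hi)) (Or.inr (Or.inr hj))
  -- second moments agree
  have mom : ∀ i j : Fin m, ¬(i = n1 ∧ j = n2) → ¬(i = n2 ∧ j = n1) →
      ∫ ω, X' ω i * X' ω j ∂ν = ∫ ω, X ω i * X ω j ∂μ := by
    intro i j a b
    exact ((pair i j a b).comp (measurable_fst.mul measurable_snd)).integral_eq
  have memX' : ∀ i : Fin m, MemLp (fun ω => X' ω i) 2 ν := by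
    intro i
    have hni : ¬(i = n1 ∧ i = n2) := by rintro ⟨rfl, h⟩; exact n12 h
    have q : IdentDistrib (fun ω => X' ω i) (fun ω => X ω i) ν μ :=
      (pair i i hni (by rintro ⟨rfl, h⟩; exact n12 h.symm)).comp measurable_fst
    exact q.symm.memLp_snd (hX2 i)
  -- main vanishing lemma
  have main : ∀ w : Fin m → ℝ,
      (∀ i j : Fin m, (i = n1 ∧ j = n2) ∨ (i = n2 ∧ j = n1) → w i * w j = 0) →
      (∀ᵐ ω ∂μ, ∑ i, w i * X ω i = 0) → ∀ᵐ ω ∂ν, ∑ i, w i * X' ω i = 0 := by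
    intro w hw hw0
    have hS'2 : MemLp (fun ω => ∑ i, w i * X' ω i) 2 ν := by
      have := memLp_finset_sum (μ := ν) (f := fun i ω => w i * X' ω i) Finset.univ
        (fun i _ => (memX' i).const_mul (w i))
      simpa using this
    have e1 := aux_expand (μ := ν) w memX'
    have e2 := aux_expand (μ := μ) w hX2
    have e3 : (∑ i, ∑ j, (w i * w j) * ∫ ω, X' ω i * X' ω j ∂ν)
        = ∑ i : Fin m, ∑ j : Fin m, (w i * w j) * ∫ ω, X ω i * X ω j ∂μ := by
      refine Finset.sum_congr rfl fun i _ => Finset.sum_congr rfl fun j _ => ?_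
      by_cases hc : (i = n1 ∧ j = n2) ∨ (i = n2 ∧ j = n1)
      · rw [hw i j hc, zero_mul, zero_mul]
      · rw [mom i j (fun hab => hc (Or.inl hab)) (fun hab => hc (Or.inr hab))]
    have e4 : ∫ ω, (∑ i, w i * X ω i) ^ 2 ∂μ = 0 := by
      rw [integral_eq_zero_of_ae]
      filter_upwards [hw0] with ω h
      rw [h]; norm_num
    have e5 : ∫ ω, (∑ i, w i * X' ω i) ^ 2 ∂ν = 0 := by
      rw [e1, e3, ← e2, e4]
    exact aux_zero hS'2.integrable_sq e5
  -- the two eliminating row-space vectors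
  set hv : Fin m → ℝ := fun j => F 1 n2 * F 0 j - F 0 n2 * F 1 j with hv_def
  set kv : Fin m → ℝ := fun j => F 1 n1 * F 0 j - F 0 n1 * F 1 j with kv_def
  have hv2 : hv n2 = 0 := by simp only [hv_def]; ring
  have kv1 : kv n1 = 0 := by simp only [kv_def]; ring
  have hdet2 : ∀ p q : Fin m, p ≠ q → F 0 p * F 1 q - F 0 q * F 1 p ≠ 0 := by
    intro p q hpq h0
    apply hF p q hpq
    rw [Matrix.det_fin_two]
    simp only [Matrix.submatrix_apply, id_eq, Matrix.cons_val_zero, Matrix.cons_val_one,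
      Matrix.head_cons]
    linarith
  have hv3 : hv n3 ≠ 0 := by
    simp only [hv_def]
    intro h0
    exact hdet2 n3 n2 n23.symm (by linarith)
  have kv2 : kv n2 ≠ 0 := by
    simp only [kv_def]
    intro h0
    exact hdet2 n2 n1 n12.symm (by linarith)
  have kv3' : True := trivial
  -- a.e. linear relations for X
  have rowEq : ∀ᵐ ω ∂μ, (∑ j, F 0 j * X ω j = 0) ∧ (∑ j, F 1 j * X ω j = 0) := by
    filter_upwards [hX0] with ω hω
    constructor
    · have := congrFun hω 0
      simpa [Matrix.mulVec, dotProduct] using this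
    · have := congrFun hω 1
      simpa [Matrix.mulVec, dotProduct] using this
  have comboX : ∀ a b : ℝ, ∀ᵐ ω ∂μ, ∑ j, (a * F 0 j - b * F 1 j) * X ω j = 0 := by
    intro a b
    filter_upwards [rowEq] with ω he
    obtain ⟨e0, e1⟩ := he
    have : ∑ j, (a * F 0 j - b * F 1 j) * X ω j
        = a * ∑ j, F 0 j * X ω j - b * ∑ j, F 1 j * X ω j := by
      rw [Finset.mul_sum, Finset.mul_sum, ← Finset.sum_sub_distrib]
      exact Finset.sum_congr rfl fun j _ => by ring
    rw [this, e0, e1]; ring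
  have hXh : ∀ᵐ ω ∂μ, ∑ j, hv j * X ω j = 0 := by
    simpa only [hv_def] using comboX (F 1 n2) (F 0 n2)
  have hXk : ∀ᵐ ω ∂μ, ∑ j, kv j * X ω j = 0 := by
    simpa only [kv_def] using comboX (F 1 n1) (F 0 n1)
  -- apply main
  have hX'h : ∀ᵐ ω ∂ν, ∑ j, hv j * X' ω j = 0 := by
    refine main hv ?_ hXh
    rintro i j (⟨rfl, rfl⟩ | ⟨rfl, rfl⟩)
    · rw [hv2, mul_zero]
    · rw [hv2, zero_mul]
  have hX'k : ∀ᵐ ω ∂ν, ∑ j, kv j * X' ω j = 0 := by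
    refine main kv ?_ hXk
    rintro i j (⟨rfl, rfl⟩ | ⟨rfl, rfl⟩)
    · rw [kv1, zero_mul]
    · rw [kv1, mul_zero]
  have vn0 : (n0 : ℕ) = 0 := by rw [hn0]
  have vn1 : (n1 : ℕ) = 1 := by rw [hn1]
  have vn2 : (n2 : ℕ) = 2 := by rw [hn2]
  have vn3 : (n3 : ℕ) = 3 := by rw [hn3]
  -- solver
  set base : ℝ × ℝ × ({k : Fin m // 4 ≤ (k : ℕ)} → ℝ) → Fin m → ℝ :=
    fun p i => if h4 : 4 ≤ (i : ℕ) then p.2.2 ⟨i, h4⟩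
      else if (i : ℕ) = 0 then p.1 else if (i : ℕ) = 1 then p.2.1 else 0 with base_def
  set G : ℝ × ℝ × ({k : Fin m // 4 ≤ (k : ℕ)} → ℝ) → Fin m → ℝ :=
    fun p i =>
      if (i : ℕ) = 2 then
        -((∑ j, kv j * base p j) + kv n3 * (-(∑ j, hv j * base p j) / hv n3)) / kv n2
      else if (i : ℕ) = 3 then -(∑ j, hv j * base p j) / hv n3
      else base p i with G_def
  have mbase : ∀ j : Fin m,
      Measurable fun p : ℝ × ℝ × ({k : Fin m // 4 ≤ (k : ℕ)} → ℝ) => base p j := by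
    intro j
    simp only [base_def]
    by_cases h4 : 4 ≤ (j : ℕ)
    · simp only [dif_pos h4]
      exact (measurable_pi_apply _).comp (measurable_snd.comp measurable_snd)
    · simp only [dif_neg h4]
      by_cases h0 : (j : ℕ) = 0
      · simp only [if_pos h0]; exact measurable_fst
      · simp only [if_neg h0]
        by_cases h1 : (j : ℕ) = 1
        · simp only [if_pos h1]; exact measurable_fst.comp measurable_snd
        · simp only [if_neg h1]; exact measurable_const
  have msum1 : Measurable fun p : ℝ × ℝ × ({k : Fin m // 4 ≤ (k : ℕ)} → ℝ) =>
      ∑ j, hv j * base p j := Finset.measurable_sum _ fun j _ => (mbase j).const_mul _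
  have msum2 : Measurable fun p : ℝ × ℝ × ({k : Fin m // 4 ≤ (k : ℕ)} → ℝ) =>
      ∑ j, kv j * base p j := Finset.measurable_sum _ fun j _ => (mbase j).const_mul _
  have mG : Measurable G := by
    rw [G_def]
    refine measurable_pi_lambda _ fun i => ?_
    by_cases h2 : (i : ℕ) = 2
    · simp only [if_pos h2]
      exact ((msum2.add (((msum1.neg).div_const _).const_mul _)).neg).div_const _
    · simp only [if_neg h2]
      by_cases h3 : (i : ℕ) = 3
      · simp only [if_pos h3]; exact (msum1.neg).div_const _
      · simp only [if_neg h3]; exact mbase i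
  have hbase : ∀ (x : Fin m → ℝ) (j : Fin m),
      base (x n0, x n1, fun k : {k : Fin m // 4 ≤ (k : ℕ)} => x k) j
        = if (j : ℕ) = 2 ∨ (j : ℕ) = 3 then 0 else x j := by
    intro x j
    simp only [base_def]
    by_cases h4 : 4 ≤ (j : ℕ)
    · rw [dif_pos h4, if_neg (by omega)]
    · rw [dif_neg h4]
      rcases (by omega : (j : ℕ) = 0 ∨ (j : ℕ) = 1 ∨ (j : ℕ) = 2 ∨ (j : ℕ) = 3) with
        h | h | h | h
      · rw [if_pos h, if_neg (by omega)]
        have hj : j = n0 := Fin.ext (by omega)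
        rw [hj]
      · rw [if_neg (by omega), if_pos h, if_neg (by omega)]
        have hj : j = n1 := Fin.ext (by omega)
        rw [hj]
      · rw [if_neg (by omega), if_neg (by omega), if_pos (Or.inl h)]
      · rw [if_neg (by omega), if_neg (by omega), if_pos (Or.inr h)]
  have recon : ∀ x : Fin m → ℝ, (∑ j, hv j * x j = 0) → (∑ j, kv j * x j = 0) →
      x = G (x n0, x n1, fun k : {k : Fin m // 4 ≤ (k : ℕ)} => x k) := by
    intro x ex ek
    have hsum : ∀ w : Fin m → ℝ,
        ∑ j, w j * base (x n0, x n1, fun k : {k : Fin m // 4 ≤ (k : ℕ)} => x k) j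
          = (∑ j, w j * x j) - w n2 * x n2 - w n3 * x n3 := by
      intro w
      have e : ∀ j : Fin m,
          w j * base (x n0, x n1, fun k : {k : Fin m // 4 ≤ (k : ℕ)} => x k) j
            = w j * x j - (if j = n2 then w n2 * x n2 else 0)
              - (if j = n3 then w n3 * x n3 else 0) := by
        intro j
        rw [hbase]
        by_cases h2 : j = n2
        · subst h2
          rw [if_pos (Or.inl vn2), if_pos rfl, if_neg n23]
          ring
        · by_cases h3 : j = n3
          · subst h3
            rw [if_pos (Or.inr vn3), if_neg h2, if_pos rfl]
            ring
          · have hc : ¬((j : ℕ) = 2 ∨ (j : ℕ) = 3) := by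
              rintro (h | h)
              · exact h2 (Fin.ext (by omega))
              · exact h3 (Fin.ext (by omega))
            rw [if_neg hc, if_neg h2, if_neg h3]
            ring
      rw [Finset.sum_congr rfl fun j _ => e j, Finset.sum_sub_distrib, Finset.sum_sub_distrib,
        Finset.sum_ite_eq' Finset.univ n2 (fun _ => w n2 * x n2),
        Finset.sum_ite_eq' Finset.univ n3 (fun _ => w n3 * x n3),
        if_pos (Finset.mem_univ _), if_pos (Finset.mem_univ _)]
    have hS1 : ∑ j, hv j * base (x n0, x n1, fun k : {k : Fin m // 4 ≤ (k : ℕ)} => x k) j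
        = -(hv n3 * x n3) := by
      rw [hsum, ex, hv2]; ring
    have hS2 : ∑ j, kv j * base (x n0, x n1, fun k : {k : Fin m // 4 ≤ (k : ℕ)} => x k) j
        = -(kv n2 * x n2) - kv n3 * x n3 := by
      rw [hsum, ek]; ring
    funext i
    simp only [G_def]
    by_cases h2 : (i : ℕ) = 2
    · rw [if_pos h2, hS1, hS2]
      have hj : i = n2 := Fin.ext (by omega)
      rw [hj]
      field_simp
      ring
    · rw [if_neg h2]
      by_cases h3 : (i : ℕ) = 3
      · rw [if_pos h3, hS1]
        have hj : i = n3 := Fin.ext (by omega)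
        rw [hj]
        field_simp
      · rw [if_neg h3, hbase, if_neg (by omega)]
  -- reconstruction a.e.
  have hXrec' : X =ᵐ[μ] fun ω => G (X ω n0, X ω n1,
      fun k : {k : Fin m // 4 ≤ (k : ℕ)} => X ω k) := by
    filter_upwards [hXh, hXk] with ω e1 e2
    exact recon (X ω) e1 e2
  have hX'rec' : X' =ᵐ[ν] fun ω => G (X' ω n0, X' ω n1,
      fun k : {k : Fin m // 4 ≤ (k : ℕ)} => X' ω k) := by
    filter_upwards [hX'h, hX'k] with ω e1 e2
    exact recon (X' ω) e1 e2
  have T'aem : AEMeasurable (fun ω => (X' ω n0, X' ω n1,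
      fun k : {k : Fin m // 4 ≤ (k : ℕ)} => X' ω k)) ν := h12Z.aemeasurable_fst
  have aeX' : AEMeasurable X' ν := (mG.comp_aemeasurable T'aem).congr hX'rec'.symm
  have step1 : IdentDistrib X' (fun ω => G (X' ω n0, X' ω n1,
      fun k : {k : Fin m // 4 ≤ (k : ℕ)} => X' ω k)) ν ν :=
    IdentDistrib.of_ae_eq aeX' hX'rec'
  have step3 : IdentDistrib (fun ω => G (X ω n0, X ω n1,
      fun k : {k : Fin m // 4 ≤ (k : ℕ)} => X ω k)) X μ μ :=
    (IdentDistrib.of_ae_eq hXmeas.aemeasurable hXrec').symm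
  exact (step1.trans (h12Z.comp mG)).trans step3
end

section
/- Let K be the (m+v)×(m−2) Vandermonde-type matrix whose row associated to index a ∈ {1,...,m+v} is (1, α(a), α(a)^2,...,α(a)^{m-3}) for distinct reals α(a). For indices e1, e2 (with α(e1) < α(e2)) and f1, f2 (with α(f2) < α(f1), and α(f1),α(f2) both greater than α(e1),α(e2)) and a set Z of m−4 further indices disjoint from {e1,e2,f1,f2}, the product of determinants |K_{e1,e2,Z}| · |K_{f1,f2,Z}| · |K_{e1,f1,Z}| · |K_{e2,f2,Z}| is strictly negative, where K_S denotes the square submatrix of K formed by the rows indexed by S ∪ Z (rows within each submatrix ordered consistently by α). -/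
open Matrix

lemma det_vandermonde_cons' {n : ℕ} (v0 : ℝ) (w : Fin n → ℝ) :
    (Matrix.vandermonde (Fin.cons v0 w)).det =
      (∏ i, (w i - v0)) * (Matrix.vandermonde w).det := by
  simp_rw [Matrix.det_vandermonde, Fin.prod_univ_succ, Fin.prod_Ioi_zero, Fin.prod_Ioi_succ,
    Fin.cons_succ, Fin.cons_zero]

lemma det_vandermonde_cons2 {n : ℕ} (x y : ℝ) (z : Fin n → ℝ) :
    (Matrix.vandermonde (Fin.cons x (Fin.cons y z))).det =
      (y - x) * (∏ i, (z i - x)) * (∏ i, (z i - y)) * (Matrix.vandermonde z).det := by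
  rw [det_vandermonde_cons', det_vandermonde_cons', Fin.prod_univ_succ, Fin.cons_zero]
  simp only [Fin.cons_succ]
  ring

/-- Determinant sign condition for the Vandermonde MDS construction: with nodes
`a1 < a2 < b2 < b1` (so `α(e1) < α(e2)`, `α(f2) < α(f1)`, and the `f`-values exceed the
`e`-values) and further distinct nodes `z` (the `α`-values of the index set `Z`, listed
in a common order in all four submatrices), the product of the four Vandermonde
determinants `|K_{e1,e2,Z}| · |K_{f1,f2,Z}| · |K_{e1,f1,Z}| · |K_{e2,f2,Z}|`
is strictly negative. -/
theorem stmt6 (n : ℕ) (a1 a2 b1 b2 : ℝ) (z : Fin n → ℝ)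
    (ha : a1 < a2) (hb : b2 < b1) (hab : a2 < b2)
    (hzinj : Function.Injective z)
    (hz : ∀ i, z i ≠ a1 ∧ z i ≠ a2 ∧ z i ≠ b1 ∧ z i ≠ b2) :
    (Matrix.vandermonde (Fin.cons a1 (Fin.cons a2 z))).det *
    (Matrix.vandermonde (Fin.cons b1 (Fin.cons b2 z))).det *
    (Matrix.vandermonde (Fin.cons a1 (Fin.cons b1 z))).det *
    (Matrix.vandermonde (Fin.cons a2 (Fin.cons b2 z))).det < 0 := by
  simp_rw [det_vandermonde_cons2]
  set Q1 := ∏ i, (z i - a1) with hQ1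
  set Q2 := ∏ i, (z i - a2) with hQ2
  set R1 := ∏ i, (z i - b1) with hR1
  set R2 := ∏ i, (z i - b2) with hR2
  set D := (Matrix.vandermonde z).det with hD
  have hQ1ne : Q1 ≠ 0 := Finset.prod_ne_zero_iff.2 fun i _ => sub_ne_zero.2 (hz i).1
  have hQ2ne : Q2 ≠ 0 := Finset.prod_ne_zero_iff.2 fun i _ => sub_ne_zero.2 (hz i).2.1
  have hR1ne : R1 ≠ 0 := Finset.prod_ne_zero_iff.2 fun i _ => sub_ne_zero.2 (hz i).2.2.1
  have hR2ne : R2 ≠ 0 := Finset.prod_ne_zero_iff.2 fun i _ => sub_ne_zero.2 (hz i).2.2.2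
  have hDne : D ≠ 0 := by
    rw [hD, Ne, Matrix.det_vandermonde_eq_zero_iff]
    rintro ⟨i, j, hij, hne⟩
    exact hne (hzinj hij)
  have key : ((a2 - a1) * Q1 * Q2 * D) * ((b2 - b1) * R1 * R2 * D) *
      ((b1 - a1) * Q1 * R1 * D) * ((b2 - a2) * Q2 * R2 * D) =
      ((a2 - a1) * (b2 - b1) * (b1 - a1) * (b2 - a2)) * (Q1 * Q2 * R1 * R2 * D * D) ^ 2 := by
    ring
  rw [key]
  have hsq : (Q1 * Q2 * R1 * R2 * D * D) ^ 2 > 0 := by positivity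
  have hc : (a2 - a1) * (b2 - b1) * (b1 - a1) * (b2 - a2) < 0 :=
    mul_neg_of_neg_of_pos (mul_neg_of_neg_of_pos
      (mul_neg_of_pos_of_neg (by linarith) (by linarith)) (by linarith)) (by linarith)
  exact mul_neg_of_neg_of_pos hc hsq
end

section
/- Let X be uniformly distributed on the set P_k = { x ∈ Z^m : F x = 0, |x_i| ≤ k for all i }, where F is an integer u×m matrix, and let K be an integer matrix whose columns form a basis of the rational null space of F. Then for every subset S ⊆ {1,...,m}, the limit as k → ∞ of H(X_S) / log k equals rank(K_S), where K_S is the submatrix of K consisting of the rows indexed by S and H denotes Shannon entropy. -/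
open Filter

/-- The integer points of the polytope `{x ∈ ℤ^m : F x = 0, |x_i| ≤ k}`. -/
noncomputable def polytopePts (u m : ℕ) (F : Matrix (Fin u) (Fin m) ℤ) (k : ℕ) : Finset (Fin m → ℤ) :=
  (Fintype.piFinset fun _ : Fin m => Finset.Icc (-(k : ℤ)) (k : ℤ)).filter
    fun x => F.mulVec x = 0

/-- Shannon entropy (natural log) of the pushforward under `f` of the uniform
distribution on the finite set `P`. -/
noncomputable def projEntropy {β γ : Type*} [DecidableEq β] [DecidableEq γ]
    (P : Finset β) (f : β → γ) : ℝ :=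
  ∑ y ∈ P.image f,
    Real.negMulLog (((P.filter fun x => f x = y).card : ℝ) / (P.card : ℝ))

section entropyHelpers

variable {β γ : Type*} [DecidableEq β] [DecidableEq γ]

lemma sum_fiber_div (P : Finset β) (hP : P.Nonempty) (f : β → γ) :
    ∑ y ∈ P.image f, ((P.filter fun x => f x = y).card : ℝ) / (P.card : ℝ) = 1 := by
  rw [← Finset.sum_div, div_eq_one_iff_eq (by exact_mod_cast (Finset.card_pos.mpr hP).ne')]
  exact_mod_cast (Finset.card_eq_sum_card_image f P).symm

lemma fiber_pos (P : Finset β) (f : β → γ) {y : γ} (hy : y ∈ P.image f) :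
    0 < (P.filter fun x => f x = y).card := by
  obtain ⟨x, hx, rfl⟩ := Finset.mem_image.mp hy
  exact Finset.card_pos.mpr ⟨x, Finset.mem_filter.mpr ⟨hx, rfl⟩⟩

lemma projEntropy_le (P : Finset β) (hP : P.Nonempty) (f : β → γ) :
    projEntropy P f ≤ Real.log ((P.image f).card) := by
  classical
  set w : γ → ℝ := fun y => ((P.filter fun x => f x = y).card : ℝ) / (P.card : ℝ) with hw
  have hPc : (0:ℝ) < P.card := by exact_mod_cast Finset.card_pos.mpr hP
  have hwpos : ∀ y ∈ P.image f, 0 < w y := fun y hy => by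
    have := fiber_pos P f hy
    have : (0:ℝ) < ((P.filter fun x => f x = y).card : ℝ) := by exact_mod_cast this
    exact div_pos this hPc
  have hsum : ∑ y ∈ P.image f, w y = 1 := sum_fiber_div P hP f
  have jensen := strictConcaveOn_log_Ioi.concaveOn.le_map_sum (t := P.image f) (w := w)
      (p := fun y => (w y)⁻¹) (fun y hy => (hwpos y hy).le) hsum
      (fun y hy => Set.mem_Ioi.mpr (inv_pos.mpr (hwpos y hy)))
  have h1 : projEntropy P f = ∑ y ∈ P.image f, w y • Real.log (w y)⁻¹ := by
    unfold projEntropy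
    refine Finset.sum_congr rfl fun y hy => ?_
    rw [Real.negMulLog, Real.log_inv, smul_eq_mul]; ring
  have h2 : (∑ y ∈ P.image f, w y • (w y)⁻¹) = ((P.image f).card : ℝ) := by
    rw [Finset.sum_congr rfl fun y hy => by
      rw [smul_eq_mul, mul_inv_cancel₀ (hwpos y hy).ne']]
    simp
  rw [h1, ← h2]
  exact jensen

lemma le_projEntropy (P : Finset β) (hP : P.Nonempty) (f : β → γ) (M : ℕ) (hM : 0 < M)
    (hfib : ∀ y ∈ P.image f, (P.filter fun x => f x = y).card ≤ M) :
    Real.log P.card - Real.log M ≤ projEntropy P f := by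
  classical
  set w : γ → ℝ := fun y => ((P.filter fun x => f x = y).card : ℝ) / (P.card : ℝ) with hw
  have hPc : (0:ℝ) < P.card := by exact_mod_cast Finset.card_pos.mpr hP
  have hMc : (0:ℝ) < M := by exact_mod_cast hM
  have hsum : ∑ y ∈ P.image f, w y = 1 := sum_fiber_div P hP f
  have key : ∀ y ∈ P.image f,
      w y * (Real.log P.card - Real.log M) ≤ Real.negMulLog (w y) := by
    intro y hy
    have hfp : (0:ℝ) < ((P.filter fun x => f x = y).card : ℝ) := by
      exact_mod_cast fiber_pos P f hy
    have hwpos : 0 < w y := div_pos hfp hPc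
    have h1 : Real.negMulLog (w y) = w y * Real.log (w y)⁻¹ := by
      rw [Real.negMulLog, Real.log_inv]; ring
    rw [h1]
    refine mul_le_mul_of_nonneg_left ?_ hwpos.le
    have h2 : (w y)⁻¹ = (P.card : ℝ) / ((P.filter fun x => f x = y).card : ℝ) := by
      rw [hw]; field_simp
    rw [← Real.log_div hPc.ne' hMc.ne', h2]
    apply Real.log_le_log (by positivity)
    apply div_le_div_of_nonneg_left hPc.le hfp
    exact_mod_cast hfib y hy
  calc Real.log P.card - Real.log M
      = ∑ y ∈ P.image f, w y * (Real.log P.card - Real.log M) := by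
        rw [← Finset.sum_mul, hsum, one_mul]
    _ ≤ ∑ y ∈ P.image f, Real.negMulLog (w y) := Finset.sum_le_sum key
    _ = projEntropy P f := rfl

end entropyHelpers

section countingHelpers

lemma card_le_pow_box {α : Type*} [Fintype α] [DecidableEq α] (k : ℕ) (A : Finset (α → ℤ))
    (hA : ∀ x ∈ A, ∀ i, x i ∈ Finset.Icc (-(k:ℤ)) (k:ℤ))
    (T : Finset α)
    (hinj : ∀ x ∈ A, ∀ y ∈ A, (∀ i ∈ T, x i = y i) → x = y) :
    A.card ≤ (2*k+1) ^ T.card := by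
  classical
  have hle := Finset.card_le_card_of_injOn
    (f := fun x : α → ℤ => (fun i : {i // i ∈ T} => x i.1))
    (t := Fintype.piFinset fun _ : {i // i ∈ T} => Finset.Icc (-(k:ℤ)) (k:ℤ))
    (fun x hx => Fintype.mem_piFinset.mpr fun i => hA x hx i.1)
    (fun x hx y hy hxy => hinj x hx y hy fun i hi => congrFun hxy ⟨i, hi⟩)
  refine hle.trans ?_
  rw [Fintype.card_piFinset]
  have hIcc : (Finset.Icc (-(k:ℤ)) (k:ℤ)).card = 2*k+1 := by
    rw [Int.card_Icc]; omega
  simp only [hIcc, Finset.prod_const, Finset.card_univ, Fintype.card_coe]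
  exact le_rfl

lemma exists_subset_card_span {m : ℕ} {V : Type*} [AddCommGroup V] [Module ℚ V]
    (row : Fin m → V) (S : Finset (Fin m)) :
    ∃ S' : Finset (Fin m), S' ⊆ S ∧
      S'.card = Module.finrank ℚ (Submodule.span ℚ (row '' S)) ∧
      Submodule.span ℚ (row '' S') = Submodule.span ℚ (row '' S) := by
  classical
  obtain ⟨b, hbsub, hbspan, hbind⟩ := exists_linearIndependent ℚ (row '' ↑S)
  have hbfin : b.Finite := (S.finite_toSet.image row).subset hbsub
  let bF : Finset V := hbfin.toFinset
  have hmem : ∀ v ∈ bF, v ∈ row '' ↑S := fun v hv => hbsub (hbfin.mem_toFinset.mp hv)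
  let g : {v // v ∈ bF} → Fin m := fun v => (hmem v.1 v.2).choose
  have hg : ∀ v : {v // v ∈ bF}, (g v) ∈ S ∧ row (g v) = v.1 := fun v => by
    obtain ⟨h1, h2⟩ := (hmem v.1 v.2).choose_spec
    exact ⟨h1, h2⟩
  refine ⟨bF.attach.image g, ?_, ?_, ?_⟩
  · intro i hi
    obtain ⟨v, _, rfl⟩ := Finset.mem_image.mp hi
    exact (hg v).1
  · have hcard : (bF.attach.image g).card = bF.card := by
      rw [Finset.card_image_of_injective _ (fun v v' hvv' => by
        have := (hg v).2; have h2 := (hg v').2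
        apply Subtype.ext
        rw [← (hg v).2, ← (hg v').2, hvv']), Finset.card_attach]
    rw [hcard, ← hbspan]
    haveI : Fintype b := hbfin.fintype
    rw [finrank_span_set_eq_card hbind]
    simp [bF, Set.toFinset_card, Set.Finite.card_toFinset]
  · have himg : row '' ↑(bF.attach.image g) = b := by
      ext v
      constructor
      · rintro ⟨i, hi, rfl⟩
        simp only [Finset.coe_image, Set.mem_image, Finset.mem_coe] at hi
        obtain ⟨u, _, rfl⟩ := hi
        rw [(hg u).2]
        exact hbfin.mem_toFinset.mp u.2
      · intro hv
        refine ⟨g ⟨v, hbfin.mem_toFinset.mpr hv⟩, ?_, (hg _).2⟩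
        simp only [Finset.coe_image, Set.mem_image, Finset.mem_coe]
        exact ⟨⟨v, hbfin.mem_toFinset.mpr hv⟩, Finset.mem_attach _ _, rfl⟩
    rw [himg, hbspan]

end countingHelpers

section algHelpers

variable {m r : ℕ}

def dotLin (r : ℕ) (w : Fin r → ℚ) : (Fin r → ℚ) →ₗ[ℚ] ℚ where
  toFun v := dotProduct v w
  map_add' a b := add_dotProduct a b w
  map_smul' c a := by simp [smul_dotProduct]

lemma dot_zero_of_span {s : Set (Fin r → ℚ)} {w : Fin r → ℚ}
    (h : ∀ v ∈ s, dotProduct v w = 0) :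
    ∀ v ∈ Submodule.span ℚ s, dotProduct v w = 0 := by
  intro v hv
  have hle : Submodule.span ℚ s ≤ LinearMap.ker (dotLin r w) :=
    Submodule.span_le.mpr fun u hu => LinearMap.mem_ker.mpr (h u hu)
  exact hle hv

lemma span_rows_top (K' : Matrix (Fin m) (Fin r) ℚ)
    (hindep : ∀ c : Fin r → ℚ, K'.mulVec c = 0 → c = 0) :
    Submodule.span ℚ (Set.range K') = ⊤ := by
  have hker : LinearMap.ker K'.mulVecLin = ⊥ := by
    rw [LinearMap.ker_eq_bot']
    intro c hc
    exact hindep c (by rwa [Matrix.mulVecLin_apply] at hc)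
  have h1 : K'.rank = r := by
    have := LinearMap.finrank_range_add_finrank_ker K'.mulVecLin
    rw [hker, finrank_bot] at this
    simpa [Matrix.rank] using this
  have h2 := Matrix.rank_eq_finrank_span_row K'
  rw [h1] at h2
  unfold Matrix.row at h2
  apply Submodule.eq_top_of_finrank_eq
  rw [← h2]
  simp

lemma rank_submatrix_eq_finrank_span (K' : Matrix (Fin m) (Fin r) ℚ) (S : Finset (Fin m)) :
    (K'.submatrix (Subtype.val : {i : Fin m // i ∈ S} → Fin m) id).rank
      = Module.finrank ℚ (Submodule.span ℚ ((fun i => K' i) '' ↑S)) := by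
  rw [Matrix.rank_eq_finrank_span_row]
  have hr : Set.range (K'.submatrix (Subtype.val : {i : Fin m // i ∈ S} → Fin m) id)
      = (fun i => K' i) '' ↑S := by
    rw [show K'.submatrix (Subtype.val : {i : Fin m // i ∈ S} → Fin m) id
        = (fun i => K' i) ∘ (Subtype.val : {i : Fin m // i ∈ S} → Fin m) from rfl,
      Set.range_comp, Subtype.range_coe_subtype]
    rfl
  unfold Matrix.row
  rw [hr]

end algHelpers

/-- Proposition 1: if `X` is uniform on the polytope `P_k` and the columns of `K`
form a basis of the null space of `F`, then for every coordinate set `S`,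
`H(X_S) / log k → rank(K_S)` as `k → ∞`. -/
theorem stmt7 (u m r : ℕ) (F : Matrix (Fin u) (Fin m) ℤ) (K : Matrix (Fin m) (Fin r) ℤ)
    (hspan : ∀ x : Fin m → ℚ, (F.map (Int.cast : ℤ → ℚ)).mulVec x = 0 ↔
      ∃ c : Fin r → ℚ, x = (K.map (Int.cast : ℤ → ℚ)).mulVec c)
    (hindep : ∀ c : Fin r → ℚ, (K.map (Int.cast : ℤ → ℚ)).mulVec c = 0 → c = 0)
    (S : Finset (Fin m)) :
    Tendsto (fun k : ℕ =>
        projEntropy (polytopePts u m F k)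
          (fun x => fun i : {i : Fin m // i ∈ S} => x i) / Real.log k)
      atTop
      (nhds (((K.map (Int.cast : ℤ → ℚ)).submatrix
        (Subtype.val : {i : Fin m // i ∈ S} → Fin m) id).rank : ℝ)) := by
  classical
  set K' : Matrix (Fin m) (Fin r) ℚ := K.map (Int.cast : ℤ → ℚ) with hK'def
  set row : Fin m → (Fin r → ℚ) := fun i => K' i with hrowdef
  set d : ℕ := Module.finrank ℚ (Submodule.span ℚ (row '' ↑S)) with hddef
  have hrank : (K'.submatrix (Subtype.val : {i : Fin m // i ∈ S} → Fin m) id).rank = d :=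
    rank_submatrix_eq_finrank_span K' S
  rw [hrank]
  -- basic objects
  set f : (Fin m → ℤ) → ({i : Fin m // i ∈ S} → ℤ) :=
    fun x => fun i : {i : Fin m // i ∈ S} => x i with hfdef
  -- nonemptiness
  have hP : ∀ k : ℕ, (polytopePts u m F k).Nonempty := by
    intro k
    refine ⟨0, Finset.mem_filter.mpr ⟨Fintype.mem_piFinset.mpr fun i => ?_, ?_⟩⟩
    · simp [Finset.mem_Icc]
    · simp [Matrix.mulVec_zero]
  -- every point of the polytope is K' c for some rational c
  have hcast : ∀ k : ℕ, ∀ x ∈ polytopePts u m F k,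
      ∃ c : Fin r → ℚ, (fun i => ((x i : ℤ) : ℚ)) = K'.mulVec c := by
    intro k x hx
    have hFx : F.mulVec x = 0 := (Finset.mem_filter.mp hx).2
    have : (F.map (Int.cast : ℤ → ℚ)).mulVec (fun i => ((x i : ℤ) : ℚ)) = 0 := by
      funext i
      have := (RingHom.map_mulVec (Int.castRingHom ℚ) F x i).symm
      simp [hFx] at this
      exact this
    exact hspan _ |>.mp this
  -- d ≤ r
  have hdr : d ≤ r := by
    have := Submodule.finrank_le (Submodule.span ℚ (row '' ↑S))
    simpa using this
  -- select S' ⊆ S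
  obtain ⟨S', hS'sub, hS'card, hS'span⟩ := exists_subset_card_span row S
  -- quotient selection T'
  set W : Submodule ℚ (Fin r → ℚ) := Submodule.span ℚ (row '' ↑S) with hWdef
  set q : Fin m → ((Fin r → ℚ) ⧸ W) := fun i => W.mkQ (row i) with hqdef
  have hrowtop : Submodule.span ℚ (Set.range row) = ⊤ := span_rows_top K' hindep
  have hqtop : Submodule.span ℚ (q '' ↑(Finset.univ : Finset (Fin m))) = ⊤ := by
    have h1 : q '' ↑(Finset.univ : Finset (Fin m)) = W.mkQ '' (Set.range row) := by
      rw [Finset.coe_univ, Set.image_univ]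
      exact Set.range_comp (W.mkQ) row
    rw [h1, ← Submodule.map_span, hrowtop, Submodule.map_top, Submodule.range_mkQ]
  obtain ⟨T', _, hT'card, hT'span⟩ := exists_subset_card_span q Finset.univ
  have hT'card' : T'.card = r - d := by
    rw [hT'card, hqtop, finrank_top]
    have := Submodule.finrank_quotient_add_finrank W
    have hfr : Module.finrank ℚ (Fin r → ℚ) = r := by simp
    omega
  -- dot product facts
  have hmv : ∀ (c : Fin r → ℚ) (i : Fin m), K'.mulVec c i = dotProduct (row i) c :=
    fun c i => rfl
  -- key injectivity (i)
  have hinj1 : ∀ k : ℕ, ∀ x ∈ polytopePts u m F k, ∀ y ∈ polytopePts u m F k,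
      (∀ i ∈ S', x i = y i) → ∀ i ∈ S, x i = y i := by
    intro k x hx y hy hagree i hiS
    obtain ⟨c, hc⟩ := hcast k x hx
    obtain ⟨c', hc'⟩ := hcast k y hy
    have hdot : ∀ j ∈ S', dotProduct (row j) (c - c') = 0 := by
      intro j hj
      have hxj : ((x j : ℤ) : ℚ) = dotProduct (row j) c := by
        rw [← hmv]; exact congrFun hc j
      have hyj : ((y j : ℤ) : ℚ) = dotProduct (row j) c' := by
        rw [← hmv]; exact congrFun hc' j
      rw [dotProduct_sub, ← hxj, ← hyj, hagree j hj, sub_self]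
    have hspan' : ∀ v ∈ Submodule.span ℚ (row '' ↑S'), dotProduct v (c - c') = 0 :=
      dot_zero_of_span (by rintro v ⟨j, hj, rfl⟩; exact hdot j hj)
    have hrowi : dotProduct (row i) (c - c') = 0 := by
      apply hspan'
      rw [hS'span]
      exact Submodule.subset_span ⟨i, hiS, rfl⟩
    have : ((x i : ℤ) : ℚ) = ((y i : ℤ) : ℚ) := by
      have hxj : ((x i : ℤ) : ℚ) = dotProduct (row i) c := by
        rw [← hmv]; exact congrFun hc i
      have hyj : ((y i : ℤ) : ℚ) = dotProduct (row i) c' := by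
        rw [← hmv]; exact congrFun hc' i
      rw [hxj, hyj, ← sub_eq_zero, ← dotProduct_sub]
      exact hrowi
    exact_mod_cast this
  -- key injectivity (ii)
  have hinj2 : ∀ k : ℕ, ∀ x ∈ polytopePts u m F k, ∀ y ∈ polytopePts u m F k,
      (∀ i ∈ S, x i = y i) → (∀ i ∈ T', x i = y i) → x = y := by
    intro k x hx y hy hagS hagT
    obtain ⟨c, hc⟩ := hcast k x hx
    obtain ⟨c', hc'⟩ := hcast k y hy
    have hdot : ∀ j : Fin m, (j ∈ S ∨ j ∈ T') → dotProduct (row j) (c - c') = 0 := by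
      intro j hj
      have hxy : x j = y j := by rcases hj with h | h; exacts [hagS j h, hagT j h]
      have hxj : ((x j : ℤ) : ℚ) = dotProduct (row j) c := by
        rw [← hmv]; exact congrFun hc j
      have hyj : ((y j : ℤ) : ℚ) = dotProduct (row j) c' := by
        rw [← hmv]; exact congrFun hc' j
      rw [dotProduct_sub, ← hxj, ← hyj, hxy, sub_self]
    -- the kernel submodule contains W and span of T' rows, which sup to ⊤
    have hWle : W ≤ LinearMap.ker (dotLin r (c - c')) := by
      rw [hWdef]
      apply Submodule.span_le.mpr
      rintro v ⟨j, hj, rfl⟩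
      exact LinearMap.mem_ker.mpr (hdot j (Or.inl hj))
    have hT'le : Submodule.span ℚ (row '' ↑T') ≤ LinearMap.ker (dotLin r (c - c')) := by
      apply Submodule.span_le.mpr
      rintro v ⟨j, hj, rfl⟩
      exact LinearMap.mem_ker.mpr (hdot j (Or.inr hj))
    have hsup : W ⊔ Submodule.span ℚ (row '' ↑T') = ⊤ := by
      rw [← Submodule.map_mkQ_eq_top]
      have : q '' ↑T' = W.mkQ '' (row '' ↑T') := by
        rw [Set.image_image]
      rw [Submodule.map_span, ← this, hT'span, hqtop]
    have hcc : c - c' = 0 := by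
      have htop : (⊤ : Submodule ℚ (Fin r → ℚ)) ≤ LinearMap.ker (dotLin r (c - c')) := by
        rw [← hsup]; exact sup_le hWle hT'le
      have := htop (Submodule.mem_top (x := c - c'))
      have hdd : dotProduct (c - c') (c - c') = 0 := this
      exact dotProduct_self_eq_zero.mp hdd
    have hcc' : c = c' := sub_eq_zero.mp hcc
    funext i
    have : ((x i : ℤ) : ℚ) = ((y i : ℤ) : ℚ) := by
      rw [congrFun hc i, congrFun hc' i, hcc']
    exact_mod_cast this
  -- membership in box
  have hbox : ∀ k : ℕ, ∀ x ∈ polytopePts u m F k, ∀ i, x i ∈ Finset.Icc (-(k:ℤ)) (k:ℤ) :=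
    fun k x hx i => Fintype.mem_piFinset.mp (Finset.mem_filter.mp hx).1 i
  -- upper bound on image cardinality
  have himg : ∀ k : ℕ, (((polytopePts u m F k).image f).card) ≤ (2*k+1)^d := by
    intro k
    have hcard : (S'.subtype (· ∈ S)).card = d := by
      rw [Finset.card_subtype, Finset.filter_true_of_mem (fun i hi => hS'sub hi)]
      exact hS'card.trans hddef.symm
    calc ((polytopePts u m F k).image f).card
        ≤ (2*k+1) ^ (S'.subtype (· ∈ S)).card := by
          apply card_le_pow_box k _ ?_ _ ?_
          · intro yy hyy i
            obtain ⟨x, hx, rfl⟩ := Finset.mem_image.mp hyy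
            exact hbox k x hx i.1
          · intro xx hxx yy hyy hagree
            obtain ⟨a, ha, rfl⟩ := Finset.mem_image.mp hxx
            obtain ⟨b, hb, rfl⟩ := Finset.mem_image.mp hyy
            have h1 : ∀ i ∈ S', a i = b i := fun i hi =>
              hagree ⟨i, hS'sub hi⟩ (Finset.mem_subtype.mpr hi)
            have h2 := hinj1 k a ha b hb h1
            funext i
            exact h2 i.1 i.2
      _ = (2*k+1)^d := by rw [hcard]
  -- fiber bound
  have hfib : ∀ k : ℕ, ∀ y ∈ (polytopePts u m F k).image f,
      ((polytopePts u m F k).filter fun x => f x = y).card ≤ (2*k+1)^(r-d) := by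
    intro k y hy
    calc ((polytopePts u m F k).filter fun x => f x = y).card
        ≤ (2*k+1) ^ T'.card := by
          apply card_le_pow_box k _ ?_ _ ?_
          · intro x hx i
            exact hbox k x (Finset.mem_filter.mp hx).1 i
          · intro a ha b hb hagree
            have ha' := Finset.mem_filter.mp ha
            have hb' := Finset.mem_filter.mp hb
            have hagS : ∀ i ∈ S, a i = b i := fun i hi =>
              congrFun (ha'.2.trans hb'.2.symm) ⟨i, hi⟩
            exact hinj2 k a ha'.1 b hb'.1 hagS hagree
      _ = (2*k+1)^(r-d) := by rw [hT'card']
  -- lower bound on polytope cardinality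
  set Mb : ℕ := Finset.univ.sup (fun p : Fin m × Fin r => (K p.1 p.2).natAbs) with hMbdef
  set D : ℕ := r * Mb with hDdef
  have hKbound : ∀ i j, (K i j).natAbs ≤ Mb := fun i j =>
    Finset.le_sup (f := fun p : Fin m × Fin r => (K p.1 p.2).natAbs) (Finset.mem_univ (i, j))
  have hFK : ∀ c : Fin r → ℤ, F.mulVec (K.mulVec c) = 0 := by
    intro c
    have hQ : (F.map (Int.cast : ℤ → ℚ)).mulVec (K'.mulVec (fun j => (c j : ℚ))) = 0 :=
      (hspan _).mpr ⟨_, rfl⟩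
    funext i
    have h1 : ((F.mulVec (K.mulVec c)) i : ℚ) = 0 := by
      have e1 : ((Int.castRingHom ℚ) ∘ (K.mulVec c)) = K'.mulVec (fun j => (c j : ℚ)) := by
        funext j
        exact RingHom.map_mulVec (Int.castRingHom ℚ) K c j
      have e2 := RingHom.map_mulVec (Int.castRingHom ℚ) F (K.mulVec c) i
      rw [e1] at e2
      simp only [Int.coe_castRingHom] at e2
      rw [e2, hQ]
      simp
    exact_mod_cast h1
  have hlow : ∀ k : ℕ, (2*(k/(D+1))+1)^r ≤ (polytopePts u m F k).card := by
    intro k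
    set B : ℕ := k/(D+1) with hBdef
    have hmem' : ∀ c ∈ Fintype.piFinset (fun _ : Fin r => Finset.Icc (-(B:ℤ)) (B:ℤ)),
        K.mulVec c ∈ polytopePts u m F k := by
      intro c hc
      refine Finset.mem_filter.mpr ⟨Fintype.mem_piFinset.mpr fun i => ?_, hFK c⟩
      rw [Finset.mem_Icc, ← abs_le]
      have hci : ∀ j, |c j| ≤ (B:ℤ) := fun j =>
        abs_le.mpr (Finset.mem_Icc.mp (Fintype.mem_piFinset.mp hc j))
      have hDB : D * B ≤ k := by
        calc D * B ≤ (D+1) * B := Nat.mul_le_mul_right B (Nat.le_succ D)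
          _ = B * (D+1) := Nat.mul_comm _ _
          _ ≤ k := Nat.div_mul_le_self k (D+1)
      calc |K.mulVec c i| = |∑ j, K i j * c j| := rfl
        _ ≤ ∑ j, |K i j * c j| := Finset.abs_sum_le_sum_abs _ _
        _ ≤ ∑ _j : Fin r, (Mb:ℤ) * B := by
            apply Finset.sum_le_sum
            intro j _
            rw [abs_mul]
            apply mul_le_mul ?_ (hci j) (abs_nonneg _) (by positivity)
            rw [Int.abs_eq_natAbs]
            exact_mod_cast hKbound i j
        _ = ((D * B : ℕ) : ℤ) := by
            rw [Finset.sum_const, Finset.card_univ, Fintype.card_fin]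
            push_cast [hDdef]
            ring
        _ ≤ (k:ℤ) := by exact_mod_cast hDB
    have hinj' : Set.InjOn (K.mulVec)
        (Fintype.piFinset (fun _ : Fin r => Finset.Icc (-(B:ℤ)) (B:ℤ))) := by
      intro c hc c' hc' hcc
      have heq : K'.mulVec (fun j => (c j : ℚ)) = K'.mulVec (fun j => (c' j : ℚ)) := by
        funext i
        have e1 := (RingHom.map_mulVec (Int.castRingHom ℚ) K c i).symm
        have e2 := (RingHom.map_mulVec (Int.castRingHom ℚ) K c' i).symm
        simp only [Int.coe_castRingHom] at e1 e2
        rw [show ((fun j => (c j : ℚ))) = ((Int.cast : ℤ → ℚ) ∘ c) from rfl,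
          show ((fun j => (c' j : ℚ))) = ((Int.cast : ℤ → ℚ) ∘ c') from rfl]
        rw [hK'def, e1, e2, hcc]
      have hz : K'.mulVec ((fun j => (c j : ℚ)) - fun j => (c' j : ℚ)) = 0 := by
        rw [Matrix.mulVec_sub, heq, sub_self]
      have hccq := hindep _ hz
      funext j
      have := congrFun hccq j
      simp only [Pi.sub_apply, Pi.zero_apply, sub_eq_zero] at this
      exact_mod_cast this
    have hle := Finset.card_le_card_of_injOn (K.mulVec) hmem' hinj'
    rw [Fintype.card_piFinset] at hle
    have hIcc : (Finset.Icc (-(B:ℤ)) (B:ℤ)).card = 2*B+1 := by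
      rw [Int.card_Icc]; omega
    simp only [hIcc, Finset.prod_const, Finset.card_univ, Fintype.card_fin] at hle
    exact hle
  -- analytic part
  set Cl : ℝ := (r:ℝ) * Real.log ((D:ℝ)+1) + ((r:ℝ)-(d:ℝ)) * Real.log 3 with hCl
  set Cu : ℝ := (d:ℝ) * Real.log 3 with hCu
  have hkey : ∀ k : ℕ, 2 ≤ k →
      ((d:ℝ) - Cl / Real.log k ≤ projEntropy (polytopePts u m F k) f / Real.log k ∧
       projEntropy (polytopePts u m F k) f / Real.log k ≤ (d:ℝ) + Cu / Real.log k) := by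
    intro k hk2
    have hk1R : (1:ℝ) < (k:ℝ) := by exact_mod_cast hk2
    have hlogk : 0 < Real.log k := Real.log_pos hk1R
    have hkpos : (0:ℝ) < k := lt_trans zero_lt_one hk1R
    have h2k1pos : (0:ℝ) < 2*(k:ℝ)+1 := by positivity
    have hlog2k1 : Real.log (2*(k:ℝ)+1) ≤ Real.log 3 + Real.log k := by
      rw [← Real.log_mul (by norm_num) (ne_of_gt hkpos)]
      apply Real.log_le_log h2k1pos
      nlinarith [hk1R]
    have hH_up : projEntropy (polytopePts u m F k) f ≤ (d:ℝ) * (Real.log 3 + Real.log k) := by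
      have h1 := projEntropy_le (polytopePts u m F k) (hP k) f
      have h2 : Real.log ((((polytopePts u m F k).image f).card : ℕ) : ℝ)
          ≤ Real.log ((((2*k+1)^d : ℕ)) : ℝ) := by
        apply Real.log_le_log
        · have : 0 < ((polytopePts u m F k).image f).card :=
            Finset.card_pos.mpr ((hP k).image f)
          exact_mod_cast this
        · exact_mod_cast himg k
      have h3 : Real.log ((((2*k+1)^d : ℕ)) : ℝ) = (d:ℝ) * Real.log (2*(k:ℝ)+1) := by
        push_cast
        rw [Real.log_pow]
      calc projEntropy (polytopePts u m F k) f
          ≤ Real.log ((((polytopePts u m F k).image f).card : ℕ) : ℝ) := h1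
        _ ≤ Real.log ((((2*k+1)^d : ℕ)) : ℝ) := h2
        _ = (d:ℝ) * Real.log (2*(k:ℝ)+1) := h3
        _ ≤ (d:ℝ) * (Real.log 3 + Real.log k) :=
            mul_le_mul_of_nonneg_left hlog2k1 (by positivity)
    have hH_lo : (d:ℝ) * Real.log k - Cl ≤ projEntropy (polytopePts u m F k) f := by
      have hMpos : 0 < (2*k+1)^(r-d) := by positivity
      have h1 := le_projEntropy (polytopePts u m F k) (hP k) f ((2*k+1)^(r-d)) hMpos (hfib k)
      set B : ℕ := k/(D+1) with hB
      have hcardP : ((2*B+1)^r : ℕ) ≤ (polytopePts u m F k).card := hlow k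
      have hlogP : (r:ℝ) * Real.log (2*(B:ℝ)+1)
          ≤ Real.log (((polytopePts u m F k).card : ℕ) : ℝ) := by
        have : Real.log (((2*B+1:ℕ):ℝ)^r) ≤ Real.log (((polytopePts u m F k).card : ℕ) : ℝ) := by
          apply Real.log_le_log (by positivity)
          exact_mod_cast hcardP
        rw [Real.log_pow] at this
        calc (r:ℝ) * Real.log (2*(B:ℝ)+1) = (r:ℝ) * Real.log ((2*B+1:ℕ):ℝ) := by push_cast; ring_nf
          _ ≤ _ := this
      have hBk : (k:ℝ)/((D:ℝ)+1) ≤ 2*(B:ℝ)+1 := by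
        have hlt : k < (D+1)*(B+1) := by
          have h2 := Nat.div_add_mod k (D+1)
          have h3 : k % (D+1) < D+1 := Nat.mod_lt k (by omega)
          calc k = (D+1)*B + k % (D+1) := h2.symm
            _ < (D+1)*B + (D+1) := Nat.add_lt_add_left h3 _
            _ = (D+1)*(B+1) := by ring
        have hle : k ≤ (2*B+1)*(D+1) := by
          refine le_trans hlt.le ?_
          rw [Nat.mul_comm (2*B+1) (D+1)]
          exact Nat.mul_le_mul_left (D+1) (by omega)
        rw [div_le_iff₀ (by positivity)]
        exact_mod_cast hle
      have hlogB : Real.log k - Real.log ((D:ℝ)+1) ≤ Real.log (2*(B:ℝ)+1) := by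
        rw [← Real.log_div (ne_of_gt hkpos) (by positivity)]
        apply Real.log_le_log (by positivity) hBk
      have hlogfib : Real.log ((((2*k+1)^(r-d) : ℕ)) : ℝ)
          ≤ ((r:ℝ)-(d:ℝ)) * (Real.log 3 + Real.log k) := by
        have hc : ((r - d : ℕ) : ℝ) = (r:ℝ) - (d:ℝ) := by
          rw [Nat.cast_sub hdr]
        push_cast
        rw [Real.log_pow, hc]
        apply mul_le_mul_of_nonneg_left hlog2k1 (by rw [← hc]; positivity)
      calc (d:ℝ) * Real.log k - Cl
          = (r:ℝ)*(Real.log k - Real.log ((D:ℝ)+1))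
            - ((r:ℝ)-(d:ℝ)) * (Real.log 3 + Real.log k) := by
            rw [hCl]
            have hrd : ((r:ℝ)-(d:ℝ)) = ((r-d:ℕ):ℝ) := by rw [Nat.cast_sub hdr]
            have hdle : (d:ℝ) ≤ (r:ℝ) := by exact_mod_cast hdr
            ring
        _ ≤ Real.log (((polytopePts u m F k).card : ℕ) : ℝ)
            - Real.log ((((2*k+1)^(r-d) : ℕ)) : ℝ) := by
            apply sub_le_sub
            · calc (r:ℝ)*(Real.log k - Real.log ((D:ℝ)+1))
                  ≤ (r:ℝ) * Real.log (2*(B:ℝ)+1) :=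
                    mul_le_mul_of_nonneg_left hlogB (by positivity)
                _ ≤ _ := hlogP
            · exact hlogfib
        _ ≤ projEntropy (polytopePts u m F k) f := h1
    constructor
    · rw [le_div_iff₀ hlogk]
      have he : ((d:ℝ) - Cl / Real.log k) * Real.log k = (d:ℝ) * Real.log k - Cl := by
        field_simp
      rw [he]
      exact hH_lo
    · rw [div_le_iff₀ hlogk]
      have he : ((d:ℝ) + Cu / Real.log k) * Real.log k = (d:ℝ) * Real.log k + Cu := by
        field_simp
      rw [he, hCu]
      calc projEntropy (polytopePts u m F k) f ≤ (d:ℝ) * (Real.log 3 + Real.log k) := hH_up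
        _ = (d:ℝ) * Real.log (k:ℝ) + (d:ℝ) * Real.log 3 := by ring
  have hloglim : Tendsto (fun k : ℕ => (Real.log k)⁻¹) atTop (nhds 0) :=
    (Real.tendsto_log_atTop.comp tendsto_natCast_atTop_atTop).inv_tendsto_atTop
  have hlo_lim : Tendsto (fun k : ℕ => (d:ℝ) - Cl / Real.log k) atTop (nhds d) := by
    have h0 : Tendsto (fun k : ℕ => Cl / Real.log k) atTop (nhds 0) := by
      simpa [div_eq_mul_inv] using hloglim.const_mul Cl
    simpa using tendsto_const_nhds.sub h0
  have hup_lim : Tendsto (fun k : ℕ => (d:ℝ) + Cu / Real.log k) atTop (nhds d) := by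
    have h0 : Tendsto (fun k : ℕ => Cu / Real.log k) atTop (nhds 0) := by
      simpa [div_eq_mul_inv] using hloglim.const_mul Cu
    simpa using tendsto_const_nhds.add h0
  refine tendsto_of_tendsto_of_tendsto_of_le_of_le' hlo_lim hup_lim ?_ ?_
  · exact eventually_atTop.mpr ⟨2, fun k hk => (hkey k hk).1⟩
  · exact eventually_atTop.mpr ⟨2, fun k hk => (hkey k hk).2⟩
end

section
/- Let X, Y, Z be random variables in {0,1} whose joint distribution is uniform on the set {(x,y,z) ∈ {0,1}^3 : x+y+z = 1} (i.e., each of (0,0,1), (0,1,0), (1,0,0) has probability 1/3). If random variables X', Y', Z' satisfy (X',Y') ~ (X,Y), (X',Z') ~ (X,Z), and (Y',Z') ~ (Y,Z), then (X',Y',Z') ~ (X,Y,Z). -/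
open MeasureTheory ProbabilityTheory

/-- If `B, C ⊆ A` all have measure `3⁻¹`, then `B ∩ C` has measure `3⁻¹`. -/
lemma aux_inter {α : Type*} [MeasurableSpace α] (m : Measure α)
    {A B C : Set α} (hB : MeasurableSet B) (hC : MeasurableSet C)
    (hBA : B ⊆ A) (hCA : C ⊆ A)
    (hA : m A = 3⁻¹) (hBv : m B = 3⁻¹) (hCv : m C = 3⁻¹) :
    m (B ∩ C) = 3⁻¹ := by
  have h1 : m (A \ B) = 0 := by
    rw [measure_diff hBA hB.nullMeasurableSet (by rw [hBv]; simp), hA, hBv, tsub_self]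
  have h2 : m (A \ C) = 0 := by
    rw [measure_diff hCA hC.nullMeasurableSet (by rw [hCv]; simp), hA, hCv, tsub_self]
  have hset : B ∩ C = A \ ((A \ B) ∪ (A \ C)) := by
    ext x
    have hb' := @hBA x
    have hc' := @hCA x
    simp only [Set.mem_inter_iff, Set.mem_diff, Set.mem_union]
    tauto
  rw [hset, measure_diff_null (measure_union_null h1 h2), hA]

/-- A probability measure giving mass `3⁻¹` to each of three distinct points is
the uniform measure on those points. -/
lemma aux_three {α : Type*} [MeasurableSpace α] [MeasurableSingletonClass α]
    (m : Measure α) [IsProbabilityMeasure m] (a b c : α)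
    (hab : a ≠ b) (hac : a ≠ c) (hbc : b ≠ c)
    (ha : m {a} = 3⁻¹) (hb : m {b} = 3⁻¹) (hc : m {c} = 3⁻¹) :
    m = (3⁻¹ : ENNReal) • Measure.dirac a + (3⁻¹ : ENNReal) • Measure.dirac b +
      (3⁻¹ : ENNReal) • Measure.dirac c := by
  classical
  have hthird : (3⁻¹ : ENNReal) + 3⁻¹ + 3⁻¹ = 1 := by
    rw [show (3⁻¹ : ENNReal) + 3⁻¹ + 3⁻¹ = 3 * 3⁻¹ by ring, ENNReal.mul_inv_cancel] <;> simp
  have hTm : MeasurableSet ({a, b, c} : Set α) :=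
    ((measurableSet_singleton c).insert b).insert a
  have hT : ({a, b, c} : Set α) = {a} ∪ ({b} ∪ {c}) := by
    rw [Set.insert_eq, Set.insert_eq]
  have hmT : m {a, b, c} = 1 := by
    rw [hT, measure_union (by simp [Set.disjoint_left, hab, hac])
        ((measurableSet_singleton b).union (measurableSet_singleton c)),
      measure_union (by simp [hbc]) (measurableSet_singleton c), ha, hb, hc, ← add_assoc, hthird]
  have hcomp : m ({a, b, c}ᶜ) = 0 := by
    rw [measure_compl hTm (measure_ne_top _ _), measure_univ, hmT, tsub_self]
  ext s hs
  have hds : m (s \ {a, b, c}) = 0 :=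
    measure_mono_null (fun x hx => hx.2) hcomp
  have hsplit : m s = m (s ∩ {a, b, c}) := by
    rw [← measure_inter_add_diff s hTm, hds, add_zero]
  have hpt : ∀ x : α, m (s ∩ {x}) = if x ∈ s then m {x} else 0 := by
    intro x
    by_cases hx : x ∈ s
    · simp [hx, Set.inter_eq_self_of_subset_right (Set.singleton_subset_iff.mpr hx)]
    · simp [hx, Set.inter_singleton_eq_empty.mpr hx]
  have hdecomp : m (s ∩ {a, b, c}) = m (s ∩ {a}) + m (s ∩ {b}) + m (s ∩ {c}) := by
    have hU : s ∩ {a, b, c} = (s ∩ {a}) ∪ ((s ∩ {b}) ∪ (s ∩ {c})) := by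
      rw [hT, Set.inter_union_distrib_left, Set.inter_union_distrib_left]
    have d23 : Disjoint (s ∩ {b}) (s ∩ {c}) :=
      Disjoint.mono Set.inter_subset_right Set.inter_subset_right
        (Set.disjoint_singleton.mpr hbc)
    have d1 : Disjoint (s ∩ {a}) ((s ∩ {b}) ∪ (s ∩ {c})) :=
      Disjoint.mono Set.inter_subset_right
        (Set.union_subset_union Set.inter_subset_right Set.inter_subset_right)
        (by simp [Set.disjoint_union_right, hab, hac])
    rw [hU, measure_union d1 ((hs.inter (measurableSet_singleton b)).union
        (hs.inter (measurableSet_singleton c))),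
      measure_union d23 (hs.inter (measurableSet_singleton c)), ← add_assoc]
  simp only [Measure.coe_add, Pi.add_apply, Measure.smul_apply, smul_eq_mul,
    Measure.dirac_apply' _ hs, Set.indicator_apply, Pi.one_apply]
  rw [hsplit, hdecomp, hpt a, hpt b, hpt c, ha, hb, hc]
  split_ifs <;> ring

/-- Table I instance: with `(X,Y,Z)` uniform on `{(0,0,1),(0,1,0),(1,0,0)}`,
matching pairwise marginals force the full joint distribution. -/
theorem stmt9 {Ω Ω' : Type*} [MeasurableSpace Ω] [MeasurableSpace Ω']
    (μ : Measure Ω) (ν : Measure Ω') [IsProbabilityMeasure μ] [IsProbabilityMeasure ν]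
    (X Y Z : Ω → ℕ) (X' Y' Z' : Ω' → ℕ)
    (hX : Measurable X) (hY : Measurable Y) (hZ : Measurable Z)
    (hjoint : Measure.map (fun ω => (X ω, Y ω, Z ω)) μ =
      (3⁻¹ : ENNReal) • Measure.dirac ((0, 0, 1) : ℕ × ℕ × ℕ) +
      (3⁻¹ : ENNReal) • Measure.dirac ((0, 1, 0) : ℕ × ℕ × ℕ) +
      (3⁻¹ : ENNReal) • Measure.dirac ((1, 0, 0) : ℕ × ℕ × ℕ))
    (hXY : IdentDistrib (fun ω => (X' ω, Y' ω)) (fun ω => (X ω, Y ω)) ν μ)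
    (hXZ : IdentDistrib (fun ω => (X' ω, Z' ω)) (fun ω => (X ω, Z ω)) ν μ)
    (hYZ : IdentDistrib (fun ω => (Y' ω, Z' ω)) (fun ω => (Y ω, Z ω)) ν μ) :
    IdentDistrib (fun ω => (X' ω, Y' ω, Z' ω)) (fun ω => (X ω, Y ω, Z ω)) ν μ := by
  -- measurability
  have hX' : AEMeasurable X' ν := measurable_fst.comp_aemeasurable hXY.aemeasurable_fst
  have hY' : AEMeasurable Y' ν := measurable_snd.comp_aemeasurable hXY.aemeasurable_fst
  have hZ' : AEMeasurable Z' ν := measurable_snd.comp_aemeasurable hXZ.aemeasurable_fst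
  have hpair' : AEMeasurable (fun ω => (X' ω, Y' ω, Z' ω)) ν :=
    hX'.prodMk (hY'.prodMk hZ')
  have hpair : Measurable (fun ω => (X ω, Y ω, Z ω)) := hX.prodMk (hY.prodMk hZ)
  set m := Measure.map (fun ω => (X' ω, Y' ω, Z' ω)) ν with hm
  have : IsProbabilityMeasure m := Measure.isProbabilityMeasure_map hpair'
  -- projections
  set p12 : ℕ × ℕ × ℕ → ℕ × ℕ := fun p => (p.1, p.2.1) with hp12def
  set p13 : ℕ × ℕ × ℕ → ℕ × ℕ := fun p => (p.1, p.2.2) with hp13def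
  set p23 : ℕ × ℕ × ℕ → ℕ × ℕ := fun p => (p.2.1, p.2.2) with hp23def
  have hmp12 : Measurable p12 := measurable_fst.prodMk (measurable_fst.comp measurable_snd)
  have hmp13 : Measurable p13 := measurable_fst.prodMk (measurable_snd.comp measurable_snd)
  have hmp23 : Measurable p23 :=
    (measurable_fst.comp measurable_snd).prodMk (measurable_snd.comp measurable_snd)
  -- marginals of m
  have h12 : Measure.map p12 m =
      (3⁻¹ : ENNReal) • Measure.dirac ((0, 0) : ℕ × ℕ) +
      (3⁻¹ : ENNReal) • Measure.dirac ((0, 1) : ℕ × ℕ) +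
      (3⁻¹ : ENNReal) • Measure.dirac ((1, 0) : ℕ × ℕ) := by
    rw [hm, AEMeasurable.map_map_of_aemeasurable hmp12.aemeasurable hpair']
    have : (p12 ∘ fun ω => (X' ω, Y' ω, Z' ω)) = fun ω => (X' ω, Y' ω) := rfl
    rw [this, hXY.map_eq,
      show (fun ω => (X ω, Y ω)) = p12 ∘ (fun ω => (X ω, Y ω, Z ω)) from rfl,
      ← Measure.map_map hmp12 hpair, hjoint]
    rw [Measure.map_add _ _ hmp12, Measure.map_add _ _ hmp12, Measure.map_smul, Measure.map_smul,
      Measure.map_smul, Measure.map_dirac' hmp12, Measure.map_dirac' hmp12, Measure.map_dirac' hmp12]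
  have h13 : Measure.map p13 m =
      (3⁻¹ : ENNReal) • Measure.dirac ((0, 1) : ℕ × ℕ) +
      (3⁻¹ : ENNReal) • Measure.dirac ((0, 0) : ℕ × ℕ) +
      (3⁻¹ : ENNReal) • Measure.dirac ((1, 0) : ℕ × ℕ) := by
    rw [hm, AEMeasurable.map_map_of_aemeasurable hmp13.aemeasurable hpair']
    have : (p13 ∘ fun ω => (X' ω, Y' ω, Z' ω)) = fun ω => (X' ω, Z' ω) := rfl
    rw [this, hXZ.map_eq,
      show (fun ω => (X ω, Z ω)) = p13 ∘ (fun ω => (X ω, Y ω, Z ω)) from rfl,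
      ← Measure.map_map hmp13 hpair, hjoint]
    rw [Measure.map_add _ _ hmp13, Measure.map_add _ _ hmp13, Measure.map_smul, Measure.map_smul,
      Measure.map_smul, Measure.map_dirac' hmp13, Measure.map_dirac' hmp13, Measure.map_dirac' hmp13]
  have h23 : Measure.map p23 m =
      (3⁻¹ : ENNReal) • Measure.dirac ((0, 1) : ℕ × ℕ) +
      (3⁻¹ : ENNReal) • Measure.dirac ((1, 0) : ℕ × ℕ) +
      (3⁻¹ : ENNReal) • Measure.dirac ((0, 0) : ℕ × ℕ) := by
    rw [hm, AEMeasurable.map_map_of_aemeasurable hmp23.aemeasurable hpair']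
    have : (p23 ∘ fun ω => (X' ω, Y' ω, Z' ω)) = fun ω => (Y' ω, Z' ω) := rfl
    rw [this, hYZ.map_eq,
      show (fun ω => (Y ω, Z ω)) = p23 ∘ (fun ω => (X ω, Y ω, Z ω)) from rfl,
      ← Measure.map_map hmp23 hpair, hjoint]
    rw [Measure.map_add _ _ hmp23, Measure.map_add _ _ hmp23, Measure.map_smul, Measure.map_smul,
      Measure.map_smul, Measure.map_dirac' hmp23, Measure.map_dirac' hmp23, Measure.map_dirac' hmp23]
  -- evaluating preimages
  have e12 : ∀ s : Set (ℕ × ℕ), MeasurableSet s → m (p12 ⁻¹' s) =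
      ((3⁻¹ : ENNReal) • Measure.dirac ((0, 0) : ℕ × ℕ) +
      (3⁻¹ : ENNReal) • Measure.dirac ((0, 1) : ℕ × ℕ) +
      (3⁻¹ : ENNReal) • Measure.dirac ((1, 0) : ℕ × ℕ)) s := fun s hs => by
    rw [← Measure.map_apply hmp12 hs, h12]
  have e13 : ∀ s : Set (ℕ × ℕ), MeasurableSet s → m (p13 ⁻¹' s) =
      ((3⁻¹ : ENNReal) • Measure.dirac ((0, 1) : ℕ × ℕ) +
      (3⁻¹ : ENNReal) • Measure.dirac ((0, 0) : ℕ × ℕ) +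
      (3⁻¹ : ENNReal) • Measure.dirac ((1, 0) : ℕ × ℕ)) s := fun s hs => by
    rw [← Measure.map_apply hmp13 hs, h13]
  have e23 : ∀ s : Set (ℕ × ℕ), MeasurableSet s → m (p23 ⁻¹' s) =
      ((3⁻¹ : ENNReal) • Measure.dirac ((0, 1) : ℕ × ℕ) +
      (3⁻¹ : ENNReal) • Measure.dirac ((1, 0) : ℕ × ℕ) +
      (3⁻¹ : ENNReal) • Measure.dirac ((0, 0) : ℕ × ℕ)) s := fun s hs => by
    rw [← Measure.map_apply hmp23 hs, h23]
  -- singleton masses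
  have hfstm : ∀ k : ℕ, MeasurableSet ((fun q : ℕ × ℕ => q.1) ⁻¹' {k}) :=
    fun k => (measurableSet_singleton k).preimage measurable_fst
  have hsndm : ∀ k : ℕ, MeasurableSet ((fun q : ℕ × ℕ => q.2) ⁻¹' {k}) :=
    fun k => (measurableSet_singleton k).preimage measurable_snd
  -- m {(0,0,1)}
  have ha : m {((0 : ℕ), (0 : ℕ), (1 : ℕ))} = 3⁻¹ := by
    have hA : m (p13 ⁻¹' ((fun q : ℕ × ℕ => q.2) ⁻¹' {1})) = 3⁻¹ := by
      rw [e13 _ (hsndm 1)]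
      simp [Measure.dirac_apply, Set.indicator_apply]
    have hB : m (p13 ⁻¹' {((0 : ℕ), (1 : ℕ))}) = 3⁻¹ := by
      rw [e13 _ (measurableSet_singleton _)]
      simp [Measure.dirac_apply, Set.indicator_apply, Prod.ext_iff]
    have hC : m (p23 ⁻¹' {((0 : ℕ), (1 : ℕ))}) = 3⁻¹ := by
      rw [e23 _ (measurableSet_singleton _)]
      simp [Measure.dirac_apply, Set.indicator_apply, Prod.ext_iff]
    have hset : ({((0 : ℕ), (0 : ℕ), (1 : ℕ))} : Set (ℕ × ℕ × ℕ)) =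
        p13 ⁻¹' {((0 : ℕ), (1 : ℕ))} ∩ p23 ⁻¹' {((0 : ℕ), (1 : ℕ))} := by
      ext p
      simp [hp13def, hp23def, Prod.ext_iff]
      tauto
    rw [hset]
    refine aux_inter m ((measurableSet_singleton _).preimage hmp13)
      ((measurableSet_singleton _).preimage hmp23) ?_ ?_ hA hB hC
    · intro p hp; simp_all [hp13def, Prod.ext_iff]
    · intro p hp; simp_all [hp13def, hp23def, Prod.ext_iff]
  -- m {(0,1,0)}
  have hb : m {((0 : ℕ), (1 : ℕ), (0 : ℕ))} = 3⁻¹ := by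
    have hA : m (p12 ⁻¹' ((fun q : ℕ × ℕ => q.2) ⁻¹' {1})) = 3⁻¹ := by
      rw [e12 _ (hsndm 1)]
      simp [Measure.dirac_apply, Set.indicator_apply]
    have hB : m (p12 ⁻¹' {((0 : ℕ), (1 : ℕ))}) = 3⁻¹ := by
      rw [e12 _ (measurableSet_singleton _)]
      simp [Measure.dirac_apply, Set.indicator_apply, Prod.ext_iff]
    have hC : m (p23 ⁻¹' {((1 : ℕ), (0 : ℕ))}) = 3⁻¹ := by
      rw [e23 _ (measurableSet_singleton _)]
      simp [Measure.dirac_apply, Set.indicator_apply, Prod.ext_iff]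
    have hset : ({((0 : ℕ), (1 : ℕ), (0 : ℕ))} : Set (ℕ × ℕ × ℕ)) =
        p12 ⁻¹' {((0 : ℕ), (1 : ℕ))} ∩ p23 ⁻¹' {((1 : ℕ), (0 : ℕ))} := by
      ext p
      simp [hp12def, hp23def, Prod.ext_iff]
      tauto
    rw [hset]
    refine aux_inter m ((measurableSet_singleton _).preimage hmp12)
      ((measurableSet_singleton _).preimage hmp23) ?_ ?_ hA hB hC
    · intro p hp; simp_all [hp12def, Prod.ext_iff]
    · intro p hp; simp_all [hp12def, hp23def, Prod.ext_iff]
  -- m {(1,0,0)}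
  have hc : m {((1 : ℕ), (0 : ℕ), (0 : ℕ))} = 3⁻¹ := by
    have hA : m (p12 ⁻¹' ((fun q : ℕ × ℕ => q.1) ⁻¹' {1})) = 3⁻¹ := by
      rw [e12 _ (hfstm 1)]
      simp [Measure.dirac_apply, Set.indicator_apply]
    have hB : m (p12 ⁻¹' {((1 : ℕ), (0 : ℕ))}) = 3⁻¹ := by
      rw [e12 _ (measurableSet_singleton _)]
      simp [Measure.dirac_apply, Set.indicator_apply, Prod.ext_iff]
    have hC : m (p13 ⁻¹' {((1 : ℕ), (0 : ℕ))}) = 3⁻¹ := by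
      rw [e13 _ (measurableSet_singleton _)]
      simp [Measure.dirac_apply, Set.indicator_apply, Prod.ext_iff]
    have hset : ({((1 : ℕ), (0 : ℕ), (0 : ℕ))} : Set (ℕ × ℕ × ℕ)) =
        p12 ⁻¹' {((1 : ℕ), (0 : ℕ))} ∩ p13 ⁻¹' {((1 : ℕ), (0 : ℕ))} := by
      ext p
      simp [hp12def, hp13def, Prod.ext_iff]
      tauto
    rw [hset]
    refine aux_inter m ((measurableSet_singleton _).preimage hmp12)
      ((measurableSet_singleton _).preimage hmp13) ?_ ?_ hA hB hC
    · intro p hp; simp_all [hp12def, Prod.ext_iff]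
    · intro p hp; simp_all [hp12def, hp13def, Prod.ext_iff]
  refine ⟨hpair', hpair.aemeasurable, ?_⟩
  rw [hjoint, ← hm]
  exact aux_three m _ _ _ (by simp) (by simp) (by simp) ha hb hc
end
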